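/- arXiv:1402.1506 — 3 statements merged into one kernel-verified Lean document; each statement's English description precedes it below -/
import Mathlib

section
/- Let 𝒫 be a number system partition for (M,φ) whose language ℒ fulfills the specification property, and let k ∈ ℕ. Then for every q ∈ S_k there exists an infinite word ω ∈ X such that lim_{n→∞} P_k(ω,n) = q in (Δ_k, ‖·‖_1). -/
open Filter Topology Set

namespace Paper

/-- The ℓ¹ distance between two finitely-indexed real vectors. -/
noncomputable def dist1 {α : Type*} [Fintype α] (p q : α → ℝ) : ℝ :=
  ∑ b, |p b - q b|

/-- The simplex of probability vectors indexed by `α`. -/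
def Simplex (α : Type*) [Fintype α] : Set (α → ℝ) :=
  {p | (∀ b, 0 ≤ p b) ∧ ∑ b, p b = 1}

/-- The set of accumulation points, in the simplex with the ℓ¹ norm, of a sequence
of vectors. -/
def AccPts {α : Type*} [Fintype α] (f : ℕ → (α → ℝ)) : Set (α → ℝ) :=
  {p | p ∈ Simplex α ∧ ∀ ε : ℝ, 0 < ε → ∀ n₀ : ℕ, ∃ n, n₀ ≤ n ∧ dist1 (f n) p < ε}

/-- `freq ω b n` is the frequency of the block `b` among the first `n` letters of
the infinite word `ω`. -/
noncomputable def freq {N : ℕ} (ω : ℕ → Fin N) (b : List (Fin N)) (n : ℕ) : ℝ :=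
  (((Finset.range n).filter fun i =>
      (List.ofFn fun m : Fin b.length => ω (i + (m : ℕ))) = b).card : ℝ) / n

/-- The vector of frequencies of all blocks of length `k` among the first `n`
letters of the infinite word `ω`. -/
noncomputable def freqVec {N : ℕ} (k : ℕ) (ω : ℕ → Fin N) (n : ℕ) :
    (Fin k → Fin N) → ℝ :=
  fun b => freq ω (List.ofFn b) n

/-- `wordFreqAt w b n` is the frequency of the block `b` among the first `n`
positions of the finite word `w`. -/
noncomputable def wordFreqAt {N : ℕ} (w b : List (Fin N)) (n : ℕ) : ℝ :=
  (((Finset.range n).filter fun i => (w.drop i).take b.length = b).card : ℝ) / n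

/-- The frequency of the block `b` among all positions of the finite word `w`. -/
noncomputable def wordFreq {N : ℕ} (w b : List (Fin N)) : ℝ :=
  wordFreqAt w b w.length

/-- The vector of frequencies of all blocks of length `k` in the finite word `w`. -/
noncomputable def wordFreqVec {N : ℕ} (k : ℕ) (w : List (Fin N)) :
    (Fin k → Fin N) → ℝ :=
  fun b => wordFreq w (List.ofFn b)

/-- The vector of frequencies of all blocks of length `k` among the first `n`
positions of the finite word `w`. -/
noncomputable def wordFreqVecAt {N : ℕ} (k : ℕ) (w : List (Fin N)) (n : ℕ) :
    (Fin k → Fin N) → ℝ :=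
  fun b => wordFreqAt w (List.ofFn b) n

/-- The iterated Cesàro averages of the block frequencies:
`cfreq 0 ω b n = freq ω b n` and `cfreq (r+1) ω b n = (∑_{j=1}^n cfreq r ω b j)/n`. -/
noncomputable def cfreq {N : ℕ} : ℕ → (ℕ → Fin N) → List (Fin N) → ℕ → ℝ
  | 0, ω, b, n => freq ω b n
  | r + 1, ω, b, n => (∑ j ∈ Finset.Icc 1 n, cfreq r ω b j) / n

/-- The vector of `r`-th iterated Cesàro averages of the frequencies of blocks of
length `k`. -/
noncomputable def cfreqVec {N : ℕ} (r k : ℕ) (ω : ℕ → Fin N) (n : ℕ) :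
    (Fin k → Fin N) → ℝ :=
  fun b => cfreq r ω (List.ofFn b) n

/-- The tower functions: `tow 1 x = 2^x`, `tow m x = 2^(tow (m-1) x)`. -/
def tow (m x : ℕ) : ℕ := (fun y => 2 ^ y)^[m] x

section Dyn

variable {N : ℕ} {M : Type*} [MetricSpace M] [CompactSpace M]

/-- A word `w` is allowed for `(𝒫, φ)` if `⋂_{k=1}^{|w|} φ^{-k}(P_{w_k}) ≠ ∅`. -/
def Allowed (φ : M → M) (P : Fin N → Set M) (w : List (Fin N)) : Prop :=
  (⋂ m : Fin w.length, (φ^[(m : ℕ) + 1]) ⁻¹' P (w.get m)).Nonempty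

/-- The language of `(𝒫, φ)`: the set of allowed words. -/
def Lang (φ : M → M) (P : Fin N → Set M) : Set (List (Fin N)) :=
  {w | Allowed φ P w}

/-- The words of length `k` in the language of `(𝒫, φ)`. -/
def LangK (φ : M → M) (P : Fin N → Set M) (k : ℕ) : Set (List (Fin N)) :=
  {w | Allowed φ P w ∧ w.length = k}

/-- The one-sided shift space corresponding to `(𝒫, φ)`: the infinite words all of
whose finite prefixes are allowed. -/
def ShiftSpace (φ : M → M) (P : Fin N → Set M) : Set (ℕ → Fin N) :=
  {ω | ∀ n : ℕ, (List.ofFn fun m : Fin n => ω (m : ℕ)) ∈ Lang φ P}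

/-- The language fulfills the specification property with parameter `j`. -/
def Spec (φ : M → M) (P : Fin N → Set M) (j : ℕ) : Prop :=
  ∀ a ∈ Lang φ P, ∀ b ∈ Lang φ P,
    ∃ u ∈ Lang φ P, u.length ≤ j ∧ a ++ u ++ b ∈ Lang φ P

/-- The cylinder set `D_n(ω) = ⋂_{m=0}^n φ^{-m}(P_{ω_m})` in `M`. -/
def Dn (φ : M → M) (P : Fin N → Set M) (ω : ℕ → Fin N) (n : ℕ) : Set M :=
  ⋂ m : Fin (n + 1), (φ^[(m : ℕ)]) ⁻¹' P (ω (m : ℕ))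

/-- `𝒫` is a number system partition for `(M, φ)`: a topological partition
(pairwise disjoint open sets whose closures cover `M`) for a continuous `φ`, such
that `⋂_n cl(D_n(ω))` is a singleton for every `ω` in the shift space. -/
def IsNSP (φ : M → M) (P : Fin N → Set M) : Prop :=
  Continuous φ ∧ (∀ i, IsOpen (P i)) ∧ (Pairwise fun i j => Disjoint (P i) (P j)) ∧
    (⋃ i, closure (P i)) = Set.univ ∧
    ∀ ω ∈ ShiftSpace φ P, ∃ x : M, (⋂ n : ℕ, closure (Dn φ P ω n)) = {x}

/-- The set `U_∞ = ⋂_{k≥0} φ^{-k}(U)` where `U = ⋃ᵢ Pᵢ`. -/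
def Uinf (φ : M → M) (P : Fin N → Set M) : Set M :=
  ⋂ n : ℕ, (φ^[n]) ⁻¹' (⋃ i, P i)

/-- `S_k`, the union over all `ω` in the shift space of the sets of accumulation
points of the sequences of frequency vectors of blocks of length `k`. -/
def SK (φ : M → M) (P : Fin N → Set M) (k : ℕ) : Set ((Fin k → Fin N) → ℝ) :=
  ⋃ ω ∈ ShiftSpace φ P, AccPts (freqVec k ω)

/-- `𝔻 = ℚ^{ℒ_k} ∩ S_k`: the elements of `S_k` with rational coordinates. -/
def DD (φ : M → M) (P : Fin N → Set M) (k : ℕ) : Set ((Fin k → Fin N) → ℝ) :=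
  {p | p ∈ SK φ P k ∧ ∀ b, ∃ q : ℚ, p b = (q : ℝ)}

/-- Property `P` of a sequence of vectors. -/
def HasPropP (φ : M → M) (P : Fin N → Set M) {k : ℕ}
    (f : ℕ → ((Fin k → Fin N) → ℝ)) : Prop :=
  ∀ p ∈ DD φ P k, ∀ m : ℕ, 1 ≤ m → ∀ i : ℕ, ∀ ε : ℝ, 0 < ε →
    ∃ j : ℕ, i ≤ j ∧ (j : ℝ) / 2 ^ j < ε ∧
      ∀ n : ℕ, j < n → n < tow m (2 ^ j) → dist1 (f n) p < ε

/-- Property `P_{h,m,q,i}` of a sequence of vectors. -/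
def HasPropPh {α : Type*} [Fintype α] (h m i : ℕ) (q : α → ℝ)
    (f : ℕ → (α → ℝ)) : Prop :=
  ∀ ε : ℝ, 1 / (h : ℝ) < ε →
    ∃ j : ℕ, i ≤ j ∧ (j : ℝ) / 2 ^ j < ε ∧
      ∀ n : ℕ, j < n → n < tow m (2 ^ j) → dist1 (f n) q < ε

end Dyn

section Count

variable {N k : ℕ}

/-- Number of occurrences of the block `b` (length `k`) fully inside `w`. -/
noncomputable def cnt (k : ℕ) {N : ℕ} (w : List (Fin N)) (b : Fin k → Fin N) : ℕ :=
  ((Finset.range (w.length + 1 - k)).filter fun i => (w.drop i).take k = List.ofFn b).card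

lemma sum_filter_card_le (S : Finset ℕ) (f : ℕ → List (Fin N)) :
    ∑ b : Fin k → Fin N, (S.filter fun i => f i = List.ofFn b).card ≤ S.card := by
  classical
  rw [← Finset.card_biUnion]
  · exact Finset.card_le_card (Finset.biUnion_subset.2 fun b _ => Finset.filter_subset _ _)
  · intro b _ b' _ hbb'
    rw [Function.onFun, Finset.disjoint_left]
    intro i hi hi'
    simp only [Finset.mem_filter] at hi hi'
    exact hbb' (List.ofFn_injective (hi.2.symm.trans hi'.2))

lemma cnt_sum_le (w : List (Fin N)) : ∑ b : Fin k → Fin N, cnt k w b ≤ w.length + 1 - k := by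
  simpa [cnt] using sum_filter_card_le (Finset.range (w.length + 1 - k)) (fun i => (w.drop i).take k)

lemma cnt_append (hk : 1 ≤ k) (u v : List (Fin N)) :
    ∃ y : (Fin k → Fin N) → ℕ,
      (∀ b, cnt k (u ++ v) b = cnt k u b + cnt k v b + y b) ∧
      (∑ b, y b) ≤ k - 1 := by
  classical
  set L := u.length with hL
  set Mv := v.length with hMv
  set a₁ := L + 1 - k with ha₁
  set a₃ := L + Mv + 1 - k with ha₃
  set a₂ := min L a₃ with ha₂
  have h2L : a₂ ≤ L := min_le_left _ _
  have h23 : a₂ ≤ a₃ := min_le_right _ _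
  have h12 : a₁ ≤ a₂ := le_min (by omega) (by omega)
  refine ⟨fun b => ((Finset.Ico a₁ a₂).filter
      fun i => ((u ++ v).drop i).take k = List.ofFn b).card, ?_, ?_⟩
  · intro b
    have hlen : (u ++ v).length + 1 - k = a₃ := by
      simp only [List.length_append]; omega
    have hsplit : Finset.range a₃ = (Finset.range a₁ ∪ Finset.Ico a₁ a₂) ∪ Finset.Ico a₂ a₃ := by
      rw [Finset.range_eq_Ico, Finset.range_eq_Ico, Finset.Ico_union_Ico_eq_Ico (Nat.zero_le _) h12,
        Finset.Ico_union_Ico_eq_Ico (Nat.zero_le _) h23]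
    have hcnt : cnt k (u ++ v) b =
        ((Finset.range a₁).filter fun i => ((u ++ v).drop i).take k = List.ofFn b).card
        + ((Finset.Ico a₁ a₂).filter fun i => ((u ++ v).drop i).take k = List.ofFn b).card
        + ((Finset.Ico a₂ a₃).filter fun i => ((u ++ v).drop i).take k = List.ofFn b).card := by
      rw [cnt, hlen, hsplit, Finset.filter_union, Finset.filter_union,
        Finset.card_union_of_disjoint, Finset.card_union_of_disjoint]
      · exact Finset.disjoint_filter_filter (by
          rw [Finset.disjoint_left]; intro i hi hi'
          simp only [Finset.mem_range, Finset.mem_Ico] at hi hi'; omega)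
      · rw [Finset.disjoint_left]; intro i hi hi'
        simp only [Finset.mem_union, Finset.mem_filter, Finset.mem_range, Finset.mem_Ico] at hi hi'
        omega
    have hreg1 : ((Finset.range a₁).filter fun i => ((u ++ v).drop i).take k = List.ofFn b).card
        = cnt k u b := by
      rw [cnt]
      congr 1
      apply Finset.filter_congr
      intro i hi
      simp only [Finset.mem_range] at hi
      have hiL : i + k ≤ L := by omega
      rw [List.drop_append_of_le_length (by omega), List.take_append_of_le_length
        (by rw [List.length_drop]; omega)]
    have hreg3 : ((Finset.Ico a₂ a₃).filter fun i => ((u ++ v).drop i).take k = List.ofFn b).card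
        = cnt k v b := by
      by_cases hcase : k ≤ Mv + 1
      · have ha2L : a₂ = L := by omega
        have ha3L : a₃ = L + (Mv + 1 - k) := by omega
        rw [cnt]
        apply Finset.card_bij' (fun i _ => i - L) (fun i' _ => i' + L)
        · intro i hi
          simp only [Finset.mem_filter, Finset.mem_Ico] at hi
          simp only [Finset.mem_filter, Finset.mem_range]
          obtain ⟨⟨hi1, hi2⟩, hi3⟩ := hi
          refine ⟨by omega, ?_⟩
          have : i = u.length + (i - L) := by omega
          rwa [this, List.drop_length_add_append] at hi3
        · intro i' hi'
          simp only [Finset.mem_filter, Finset.mem_range] at hi'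
          simp only [Finset.mem_filter, Finset.mem_Ico]
          obtain ⟨hi1, hi2⟩ := hi'
          refine ⟨⟨by omega, by omega⟩, ?_⟩
          have : i' + L = u.length + i' := by omega
          rwa [this, List.drop_length_add_append]
        · intro i hi
          simp only [Finset.mem_filter, Finset.mem_Ico] at hi
          omega
        · intro i' _
          omega
      · have h0 : Mv + 1 - k = 0 := by omega
        have : a₂ = a₃ := by omega
        rw [cnt, ← hMv, h0]
        simp [this]
    beta_reduce
    rw [hcnt, hreg1, hreg3]; omega
  · calc ∑ b, ((Finset.Ico a₁ a₂).filter
          fun i => ((u ++ v).drop i).take k = List.ofFn b).card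
        ≤ (Finset.Ico a₁ a₂).card := sum_filter_card_le _ _
      _ ≤ k - 1 := by rw [Nat.card_Ico]; omega

end Count

section FqSec

variable {N k : ℕ}

/-- The weighted count discrepancy functional. -/
noncomputable def Fq (k : ℕ) {N : ℕ} (q : (Fin k → Fin N) → ℝ) (w : List (Fin N)) : ℝ :=
  ∑ b, |(cnt k w b : ℝ) - ((w.length : ℝ) - ((k : ℝ) - 1)) * q b|

lemma Fq_nonneg (q : (Fin k → Fin N) → ℝ) (w : List (Fin N)) : 0 ≤ Fq k q w :=
  Finset.sum_nonneg fun b _ => abs_nonneg _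

lemma Fq_crude (hk : 1 ≤ k) (q : (Fin k → Fin N) → ℝ) (hq0 : ∀ b, 0 ≤ q b)
    (hq1 : ∑ b, q b = 1) (w : List (Fin N)) : Fq k q w ≤ 2 * w.length + k := by
  have hk1 : (1 : ℝ) ≤ (k : ℝ) := by exact_mod_cast hk
  have hpt : ∀ b ∈ Finset.univ, |(cnt k w b : ℝ) - ((w.length : ℝ) - ((k : ℝ) - 1)) * q b|
      ≤ (cnt k w b : ℝ) + ((w.length : ℝ) + (k : ℝ)) * q b := by
    intro b _
    refine (abs_sub _ _).trans ?_
    rw [abs_of_nonneg (Nat.cast_nonneg _), abs_mul]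
    have h1 : |(w.length : ℝ) - ((k : ℝ) - 1)| ≤ (w.length : ℝ) + (k : ℝ) := by
      have h0 : (0:ℝ) ≤ (w.length : ℝ) := Nat.cast_nonneg _
      rw [abs_le]
      constructor <;> linarith
    have := mul_le_mul_of_nonneg_right h1 (hq0 b)
    rw [abs_of_nonneg (hq0 b)]
    linarith
  calc Fq k q w ≤ ∑ b, ((cnt k w b : ℝ) + ((w.length : ℝ) + (k : ℝ)) * q b) :=
        Finset.sum_le_sum hpt
    _ = (↑(∑ b, cnt k w b) : ℝ) + ((w.length : ℝ) + (k : ℝ)) * (∑ b, q b) := by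
        rw [Finset.sum_add_distrib, ← Finset.mul_sum, Nat.cast_sum]
    _ ≤ (w.length : ℝ) + ((w.length : ℝ) + (k : ℝ)) * 1 := by
        rw [hq1]
        have h2 : (∑ b, cnt k w b : ℕ) ≤ w.length := by
          have := cnt_sum_le (k := k) w
          omega
        have h3 : ((∑ b, cnt k w b : ℕ) : ℝ) ≤ (w.length : ℝ) := by exact_mod_cast h2
        linarith
    _ = 2 * w.length + k := by ring

lemma Fq_append (hk : 1 ≤ k) (q : (Fin k → Fin N) → ℝ) (hq0 : ∀ b, 0 ≤ q b)
    (hq1 : ∑ b, q b = 1) (u v : List (Fin N)) :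
    Fq k q (u ++ v) ≤ Fq k q u + Fq k q v + 2 * ((k : ℝ) - 1) := by
  obtain ⟨y, hy, hysum⟩ := cnt_append hk u v
  have hcast : ((∑ b, y b : ℕ) : ℝ) ≤ (k : ℝ) - 1 := by
    calc ((∑ b, y b : ℕ) : ℝ) ≤ ((k - 1 : ℕ) : ℝ) := Nat.cast_le.2 hysum
      _ = (k : ℝ) - 1 := by rw [Nat.cast_sub hk]; norm_num
  have hpt : ∀ b ∈ Finset.univ,
      |(cnt k (u ++ v) b : ℝ) - (((u ++ v).length : ℝ) - ((k : ℝ) - 1)) * q b|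
      ≤ |(cnt k u b : ℝ) - ((u.length : ℝ) - ((k : ℝ) - 1)) * q b|
        + |(cnt k v b : ℝ) - ((v.length : ℝ) - ((k : ℝ) - 1)) * q b|
        + ((y b : ℝ) + ((k : ℝ) - 1) * q b) := by
    intro b _
    rw [hy b]
    have h1 : ((u ++ v).length : ℝ) = (u.length : ℝ) + v.length := by
      rw [List.length_append]; push_cast; ring
    rw [h1]
    have h2 : ((cnt k u b + cnt k v b + y b : ℕ) : ℝ)
        - (((u.length : ℝ) + v.length) - ((k : ℝ) - 1)) * q b
        = ((cnt k u b : ℝ) - ((u.length : ℝ) - ((k : ℝ) - 1)) * q b)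
          + ((cnt k v b : ℝ) - ((v.length : ℝ) - ((k : ℝ) - 1)) * q b)
          + ((y b : ℝ) - ((k : ℝ) - 1) * q b) := by
      push_cast; ring
    rw [h2]
    refine (abs_add_three _ _ _).trans ?_
    have h3 : |(y b : ℝ) - ((k : ℝ) - 1) * q b| ≤ (y b : ℝ) + ((k : ℝ) - 1) * q b := by
      refine (abs_sub _ _).trans ?_
      rw [abs_of_nonneg (Nat.cast_nonneg _), abs_of_nonneg]
      have hkk : (0:ℝ) ≤ (k : ℝ) - 1 := by
        have : (1 : ℝ) ≤ (k : ℝ) := by exact_mod_cast hk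
        linarith
      exact mul_nonneg hkk (hq0 b)
    linarith
  calc Fq k q (u ++ v) ≤ ∑ b, (|(cnt k u b : ℝ) - ((u.length : ℝ) - ((k : ℝ) - 1)) * q b|
        + |(cnt k v b : ℝ) - ((v.length : ℝ) - ((k : ℝ) - 1)) * q b|
        + ((y b : ℝ) + ((k : ℝ) - 1) * q b)) := Finset.sum_le_sum hpt
    _ = Fq k q u + Fq k q v + ((↑(∑ b, y b) : ℝ) + ((k : ℝ) - 1) * (∑ b, q b)) := by
        rw [Finset.sum_add_distrib, Finset.sum_add_distrib, Finset.sum_add_distrib,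
          ← Finset.mul_sum, Nat.cast_sum]
        rfl
    _ ≤ Fq k q u + Fq k q v + 2 * ((k : ℝ) - 1) := by
        rw [hq1]
        have hkk : (0:ℝ) ≤ (k : ℝ) - 1 := by
          have : (1 : ℝ) ≤ (k : ℝ) := by exact_mod_cast hk
          linarith
        linarith

lemma dist1_nonneg {α : Type*} [Fintype α] (p q : α → ℝ) : 0 ≤ dist1 p q :=
  Finset.sum_nonneg fun _ _ => abs_nonneg _

lemma window_eq (hk : 1 ≤ k) (ω : ℕ → Fin N) {i n : ℕ} (h : i + k ≤ n) :
    ((List.ofFn fun m : Fin n => ω m).drop i).take k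
      = List.ofFn (fun m : Fin k => ω (i + (m : ℕ))) := by
  apply List.ext_getElem
  · simp; omega
  · intro m h1 h2
    simp only [List.getElem_take, List.getElem_drop, List.getElem_ofFn]

lemma ofFn_len_eq (ω : ℕ → Fin N) (i : ℕ) (bf : Fin k → Fin N) :
    (List.ofFn fun m : Fin ((List.ofFn bf).length) => ω (i + (m : ℕ)))
      = List.ofFn (fun m : Fin k => ω (i + (m : ℕ))) := by
  apply List.ext_getElem
  · simp
  · intro m h1 h2
    simp only [List.getElem_ofFn]

lemma freq_eq_cnt (hk : 1 ≤ k) (ω : ℕ → Fin N) (bf : Fin k → Fin N) (n : ℕ) :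
    freq ω (List.ofFn bf) n
      = (cnt k (List.ofFn fun m : Fin (n + k - 1) => ω (m : ℕ)) bf : ℝ) / n := by
  rw [freq, cnt]
  have hlen : (List.ofFn fun m : Fin (n + k - 1) => ω (m : ℕ)).length + 1 - k = n := by
    simp only [List.length_ofFn]; omega
  rw [hlen]
  congr 2
  congr 1
  apply Finset.filter_congr
  intro i hi
  simp only [Finset.mem_range] at hi
  rw [window_eq hk ω (show i + k ≤ n + k - 1 by omega), ofFn_len_eq]

end FqSec


section Build

variable {N : ℕ} {M : Type*} [MetricSpace M] [CompactSpace M]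
variable {φ : M → M} {P : Fin N → Set M} {j : ℕ}

lemma prefix_mem_lang {v w : List (Fin N)} (hw : w ∈ Lang φ P) (hpre : v <+: w) :
    v ∈ Lang φ P := by
  obtain ⟨x, hx⟩ := hw
  refine ⟨x, ?_⟩
  rw [Set.mem_iInter] at hx ⊢
  intro m
  have hlt : (m : ℕ) < w.length := lt_of_lt_of_le m.2 hpre.length_le
  have hget : v.get m = w.get ⟨m, hlt⟩ := by
    simp only [List.get_eq_getElem]
    exact hpre.getElem m.2
  rw [hget]
  exact hx ⟨m, hlt⟩

/-- One gluing step: `a ++ u ++ b` with `u` a connecting word given by specification. -/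
noncomputable def stepW (hspec : Spec φ P j) (a b : {w : List (Fin N) // w ∈ Lang φ P}) :
    {w : List (Fin N) // w ∈ Lang φ P} :=
  ⟨a.1 ++ (hspec a.1 a.2 b.1 b.2).choose ++ b.1,
   (hspec a.1 a.2 b.1 b.2).choose_spec.2.2⟩

lemma stepW_eq (hspec : Spec φ P j) (a b : {w : List (Fin N) // w ∈ Lang φ P}) :
    ∃ u : List (Fin N), u.length ≤ j ∧ (stepW hspec a b).1 = a.1 ++ u ++ b.1 :=
  ⟨_, (hspec a.1 a.2 b.1 b.2).choose_spec.2.1, rfl⟩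

/-- Append `c` glued copies of `b` to `a`. -/
noncomputable def appendW (hspec : Spec φ P j) (a b : {w : List (Fin N) // w ∈ Lang φ P}) :
    ℕ → {w : List (Fin N) // w ∈ Lang φ P}
  | 0 => a
  | c + 1 => stepW hspec (appendW hspec a b c) b

lemma appendW_zero (hspec : Spec φ P j) (a b : {w : List (Fin N) // w ∈ Lang φ P}) :
    appendW hspec a b 0 = a := rfl

lemma appendW_succ (hspec : Spec φ P j) (a b : {w : List (Fin N) // w ∈ Lang φ P}) (c : ℕ) :
    appendW hspec a b (c + 1) = stepW hspec (appendW hspec a b c) b := rfl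

lemma appendW_len_lb (hspec : Spec φ P j) (a b : {w : List (Fin N) // w ∈ Lang φ P}) (c : ℕ) :
    a.1.length + c * b.1.length ≤ (appendW hspec a b c).1.length := by
  induction c with
  | zero => simp [appendW_zero]
  | succ c ih =>
    obtain ⟨u, hu, he⟩ := stepW_eq hspec (appendW hspec a b c) b
    rw [appendW_succ, he]
    simp only [List.length_append]
    rw [Nat.succ_mul]
    omega

lemma appendW_len_ub (hspec : Spec φ P j) (a b : {w : List (Fin N) // w ∈ Lang φ P}) (c : ℕ) :
    (appendW hspec a b c).1.length ≤ a.1.length + c * (b.1.length + j) := by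
  induction c with
  | zero => simp [appendW_zero]
  | succ c ih =>
    obtain ⟨u, hu, he⟩ := stepW_eq hspec (appendW hspec a b c) b
    rw [appendW_succ, he]
    simp only [List.length_append]
    rw [Nat.succ_mul]
    omega

lemma appendW_prefix_le (hspec : Spec φ P j) (a b : {w : List (Fin N) // w ∈ Lang φ P})
    {c c' : ℕ} (h : c ≤ c') :
    (appendW hspec a b c).1 <+: (appendW hspec a b c').1 := by
  induction c' with
  | zero =>
    have : c = 0 := Nat.le_zero.1 h
    subst this
    exact List.prefix_refl _
  | succ c' ih =>
    rcases Nat.eq_or_lt_of_le h with he | hlt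
    · subst he; exact List.prefix_refl _
    · have h1 : (appendW hspec a b c).1 <+: (appendW hspec a b c').1 := ih (by omega)
      obtain ⟨u, hu, he⟩ := stepW_eq hspec (appendW hspec a b c') b
      refine h1.trans ?_
      rw [appendW_succ, he, List.append_assoc]
      exact List.prefix_append _ _

lemma appendW_Fq {k : ℕ} (hk : 1 ≤ k) (q : (Fin k → Fin N) → ℝ) (hq0 : ∀ b, 0 ≤ q b)
    (hq1 : ∑ b, q b = 1) (hspec : Spec φ P j)
    (a b : {w : List (Fin N) // w ∈ Lang φ P}) (c : ℕ) :
    Fq k q (appendW hspec a b c).1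
      ≤ Fq k q a.1 + c * (Fq k q b.1 + (2 * (j : ℝ) + 5 * k)) := by
  induction c with
  | zero => simp [appendW_zero]
  | succ c ih =>
    obtain ⟨u, hu, he⟩ := stepW_eq hspec (appendW hspec a b c) b
    rw [appendW_succ, he]
    have h1 : Fq k q ((appendW hspec a b c).1 ++ u ++ b.1)
        ≤ Fq k q ((appendW hspec a b c).1 ++ u) + Fq k q b.1 + 2 * ((k : ℝ) - 1) :=
      Fq_append hk q hq0 hq1 _ _
    have h2 : Fq k q ((appendW hspec a b c).1 ++ u)
        ≤ Fq k q (appendW hspec a b c).1 + Fq k q u + 2 * ((k : ℝ) - 1) :=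
      Fq_append hk q hq0 hq1 _ _
    have h3 : Fq k q u ≤ 2 * u.length + k := Fq_crude hk q hq0 hq1 u
    have h4 : (u.length : ℝ) ≤ (j : ℝ) := Nat.cast_le.2 hu
    have hk1 : (1 : ℝ) ≤ (k : ℝ) := by exact_mod_cast hk
    push_cast
    push_cast at ih
    nlinarith [Fq_nonneg q b.1]

lemma appendW_decomp (hspec : Spec φ P j) (a b : {w : List (Fin N) // w ∈ Lang φ P})
    (c₀ m : ℕ) (hm1 : a.1.length ≤ m) (hm2 : m ≤ (appendW hspec a b c₀).1.length) :
    ∃ c, c ≤ c₀ ∧ ∃ r : List (Fin N),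
      (appendW hspec a b c₀).1.take m = (appendW hspec a b c).1 ++ r ∧
      (appendW hspec a b c).1.length ≤ m ∧
      r.length + (appendW hspec a b c).1.length = m ∧
      r.length ≤ b.1.length + j := by
  classical
  obtain ⟨c, hcle, hc, hcmax⟩ : ∃ c, c ≤ c₀ ∧ (appendW hspec a b c).1.length ≤ m ∧
      (c < c₀ → m < (appendW hspec a b (c + 1)).1.length) := by
    refine ⟨Nat.findGreatest (fun c => (appendW hspec a b c).1.length ≤ m) c₀,
      Nat.findGreatest_le c₀,
      Nat.findGreatest_spec (P := fun c => (appendW hspec a b c).1.length ≤ m)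
        (Nat.zero_le c₀) (by simpa [appendW_zero] using hm1), ?_⟩
    intro hlt
    have hng := Nat.findGreatest_is_greatest
      (P := fun c => (appendW hspec a b c).1.length ≤ m)
      (n := c₀) (Nat.lt_succ_self _) (by omega)
    exact Nat.lt_of_not_le hng
  have hrlen : m - (appendW hspec a b c).1.length ≤ b.1.length + j := by
    rcases eq_or_lt_of_le hcle with he | hlt
    · have h2 : (appendW hspec a b c).1.length = (appendW hspec a b c₀).1.length := by rw [he]
      omega
    · have hnp := hcmax hlt
      obtain ⟨u, hu, he⟩ := stepW_eq hspec (appendW hspec a b c) b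
      have hub : (appendW hspec a b (c + 1)).1.length
          ≤ (appendW hspec a b c).1.length + (b.1.length + j) := by
        rw [appendW_succ, he]
        simp only [List.length_append]
        omega
      omega
  have hpre : (appendW hspec a b c).1 <+: (appendW hspec a b c₀).1.take m :=
    List.prefix_take_iff.2 ⟨appendW_prefix_le hspec a b hcle, hc⟩
  obtain ⟨r, hr⟩ := hpre
  have hlentake : ((appendW hspec a b c₀).1.take m).length = m := by
    rw [List.length_take]
    omega
  have hlen2 : r.length + (appendW hspec a b c).1.length = m := by
    have := congrArg List.length hr
    simp only [List.length_append] at this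
    omega
  exact ⟨c, hcle, r, hr.symm, hc, hlen2, by omega⟩

/-- The recursively constructed sequence of allowed words. -/
noncomputable def buildW (hspec : Spec φ P j) (a0 : {w : List (Fin N) // w ∈ Lang φ P})
    (ww : ℕ → {w : List (Fin N) // w ∈ Lang φ P}) (Mf : ℕ → ℕ → ℕ) :
    ℕ → {w : List (Fin N) // w ∈ Lang φ P}
  | 0 => a0
  | s + 1 => appendW hspec (buildW hspec a0 ww Mf s) (ww s)
      (Mf s (buildW hspec a0 ww Mf s).1.length)

lemma buildW_zero (hspec : Spec φ P j) (a0 : {w : List (Fin N) // w ∈ Lang φ P})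
    (ww : ℕ → {w : List (Fin N) // w ∈ Lang φ P}) (Mf : ℕ → ℕ → ℕ) :
    buildW hspec a0 ww Mf 0 = a0 := rfl

lemma buildW_succ (hspec : Spec φ P j) (a0 : {w : List (Fin N) // w ∈ Lang φ P})
    (ww : ℕ → {w : List (Fin N) // w ∈ Lang φ P}) (Mf : ℕ → ℕ → ℕ) (s : ℕ) :
    buildW hspec a0 ww Mf (s + 1) = appendW hspec (buildW hspec a0 ww Mf s) (ww s)
      (Mf s (buildW hspec a0 ww Mf s).1.length) := rfl

lemma buildW_prefix_le (hspec : Spec φ P j) (a0 : {w : List (Fin N) // w ∈ Lang φ P})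
    (ww : ℕ → {w : List (Fin N) // w ∈ Lang φ P}) (Mf : ℕ → ℕ → ℕ) {s s' : ℕ} (h : s ≤ s') :
    (buildW hspec a0 ww Mf s).1 <+: (buildW hspec a0 ww Mf s').1 := by
  induction s' with
  | zero =>
    have : s = 0 := Nat.le_zero.1 h
    subst this; exact List.prefix_refl _
  | succ s' ih =>
    rcases Nat.eq_or_lt_of_le h with he | hlt
    · subst he; exact List.prefix_refl _
    · refine (ih (by omega)).trans ?_
      rw [buildW_succ]
      have := appendW_prefix_le hspec (buildW hspec a0 ww Mf s') (ww s')
        (c := 0) (c' := Mf s' (buildW hspec a0 ww Mf s').1.length) (Nat.zero_le _)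
      rwa [appendW_zero] at this

end Build


set_option maxHeartbeats 2000000 in
/-- for every `q ∈ S_k` there is an infinite word `ω ∈ X` with
`lim_{n→∞} P_k(ω,n) = q` in `(Δ_k, ‖·‖₁)`. -/
theorem exists_generic_word
    {N : ℕ}
    {M : Type*} [MetricSpace M] [CompactSpace M]
    (φ : M → M) (P : Fin N → Set M)
    (hNSP : IsNSP φ P)
    (j : ℕ) (hspec : Spec φ P j)
    (k : ℕ) (hk : 1 ≤ k)
    (q : (Fin k → Fin N) → ℝ) (hq : q ∈ SK φ P k) :
    ∃ ω ∈ ShiftSpace φ P,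
      Tendsto (fun n => dist1 (freqVec k ω n) q) atTop (nhds 0) := by
  classical
  -- unpack q ∈ S_k
  simp only [SK, Set.mem_iUnion] at hq
  obtain ⟨ω₀, hω₀, hqmem⟩ := hq
  obtain ⟨⟨hq0, hq1⟩, hacc⟩ := hqmem
  have hk1 : (1 : ℝ) ≤ (k : ℝ) := by exact_mod_cast hk
  -- choose the approximating prefix lengths
  have hex : ∀ s : ℕ, ∃ n : ℕ, ((s + 1) * (2 * j + 5 * k) + 2 * k + 2 * j + 2 ≤ n) ∧
      dist1 (freqVec k ω₀ n) q < 1 / ((s : ℝ) + 1) := by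
    intro s
    obtain ⟨n, h1, h2⟩ := hacc (1 / ((s : ℝ) + 1)) (by positivity)
      ((s + 1) * (2 * j + 5 * k) + 2 * k + 2 * j + 2)
    exact ⟨n, h1, h2⟩
  choose nn hnnlb hnnd using hex
  have hnn1 : ∀ s, 1 ≤ nn s := fun s => by have := hnnlb s; omega
  -- the words to be repeated
  set wrd : ℕ → {w : List (Fin N) // w ∈ Lang φ P} :=
    fun s => ⟨List.ofFn fun m : Fin (nn s + k - 1) => ω₀ (m : ℕ), hω₀ _⟩ with hwrddef
  have hwlen : ∀ s, (wrd s).1.length = nn s + k - 1 := fun s => by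
    simp [hwrddef]
  -- key identity between `Fq` of a prefix and `dist1` of the frequency vector
  have key : ∀ (ω : ℕ → Fin N) (n : ℕ), 1 ≤ n →
      Fq k q (List.ofFn fun m : Fin (n + k - 1) => ω (m : ℕ))
        = (n : ℝ) * dist1 (freqVec k ω n) q := by
    intro ω n hn
    rw [Fq, dist1, Finset.mul_sum]
    refine Finset.sum_congr rfl fun b _ => ?_
    have hfv : freqVec k ω n b = freq ω (List.ofFn b) n := rfl
    rw [hfv, freq_eq_cnt hk ω b n]
    have hn0 : ((n : ℝ)) ≠ 0 := by
      have : (1 : ℝ) ≤ (n : ℝ) := by exact_mod_cast hn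
      linarith
    have hlen : ((List.ofFn fun m : Fin (n + k - 1) => ω (m : ℕ)).length : ℝ) - ((k : ℝ) - 1)
        = (n : ℝ) := by
      rw [List.length_ofFn]
      have h1 : ((n + k - 1 : ℕ) : ℝ) = (n : ℝ) + (k : ℝ) - 1 := by
        have h2 : 1 ≤ n + k := by omega
        rw [Nat.cast_sub h2]
        push_cast
        ring
      rw [h1]; ring
    rw [hlen]
    have hsplit : (cnt k (List.ofFn fun m : Fin (n + k - 1) => ω (m : ℕ)) b : ℝ)
        - (n : ℝ) * q b
        = (n : ℝ) * ((cnt k (List.ofFn fun m : Fin (n + k - 1) => ω (m : ℕ)) b : ℝ) / (n : ℝ)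
          - q b) := by
      field_simp
    rw [hsplit, abs_mul, abs_of_nonneg (Nat.cast_nonneg n)]
  -- F-value of the repeated words
  have hFwrd : ∀ s : ℕ, Fq k q (wrd s).1 ≤ (nn s : ℝ) / ((s : ℝ) + 1) := by
    intro s
    have h1 : (wrd s).1 = List.ofFn fun m : Fin (nn s + k - 1) => ω₀ (m : ℕ) := rfl
    rw [h1, key ω₀ (nn s) (hnn1 s)]
    have h2 := le_of_lt (hnnd s)
    calc (nn s : ℝ) * dist1 (freqVec k ω₀ (nn s)) q
        ≤ (nn s : ℝ) * (1 / ((s : ℝ) + 1)) :=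
          mul_le_mul_of_nonneg_left h2 (Nat.cast_nonneg _)
      _ = (nn s : ℝ) / ((s : ℝ) + 1) := by ring
  -- gain per glued copy
  have hGain : ∀ s : ℕ, Fq k q (wrd s).1 + (2 * (j : ℝ) + 5 * (k : ℝ))
      ≤ 2 * (nn s : ℝ) / ((s : ℝ) + 1) := by
    intro s
    have h3 := hFwrd s
    have h4 : (2 * (j : ℝ) + 5 * (k : ℝ)) ≤ (nn s : ℝ) / ((s : ℝ) + 1) := by
      rw [le_div_iff₀ (by positivity)]
      have h5 : ((s + 1) * (2 * j + 5 * k) : ℕ) ≤ nn s := by have := hnnlb s; omega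
      calc (2 * (j : ℝ) + 5 * (k : ℝ)) * ((s : ℝ) + 1)
          = (((s + 1) * (2 * j + 5 * k) : ℕ) : ℝ) := by push_cast; ring
        _ ≤ (nn s : ℝ) := Nat.cast_le.2 h5
    have h6 : 2 * (nn s : ℝ) / ((s : ℝ) + 1)
        = (nn s : ℝ) / ((s : ℝ) + 1) + (nn s : ℝ) / ((s : ℝ) + 1) := by ring
    linarith
  -- the construction
  have hnil : ([] : List (Fin N)) ∈ Lang φ P := by
    have h := hω₀ 0
    simpa using h
  set Mf : ℕ → ℕ → ℕ :=
    fun s L => (s + 2) * (2 * L + k) + 9 * (s + 2) * nn (s + 1) + 2 * k + 1 with hMfdef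
  set W : ℕ → {w : List (Fin N) // w ∈ Lang φ P} := buildW hspec ⟨[], hnil⟩ wrd Mf with hWdef
  have hWsucc : ∀ s : ℕ, W (s + 1) = appendW hspec (W s) (wrd s) (Mf s (W s).1.length) :=
    fun s => buildW_succ hspec ⟨[], hnil⟩ wrd Mf s
  have hMfval : ∀ s x, Mf s x = (s + 2) * (2 * x + k) + 9 * (s + 2) * nn (s + 1) + 2 * k + 1 :=
    fun s x => rfl
  have hLlb : ∀ s : ℕ, (W s).1.length + Mf s (W s).1.length * (nn s + k - 1)
      ≤ (W (s + 1)).1.length := by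
    intro s
    have h1 := appendW_len_lb hspec (W s) (wrd s) (Mf s (W s).1.length)
    rw [hwlen] at h1
    rw [hWsucc s]
    exact h1
  have hMfge : ∀ s : ℕ, Mf s (W s).1.length
      ≤ Mf s (W s).1.length * (nn s + k - 1) :=
    fun s => Nat.le_mul_of_pos_right _ (by have := hnn1 s; omega)
  have hLb1 : ∀ s : ℕ, (s + 2) * (2 * (W s).1.length + k) + 9 * (s + 2) * nn (s + 1)
      + 2 * k + 1 ≤ (W (s + 1)).1.length := by
    intro s
    have h1 := hLlb s
    have h2 := hMfge s
    have h3 := hMfval s (W s).1.length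
    omega
  have hLmono : ∀ s : ℕ, (W s).1.length + 1 ≤ (W (s + 1)).1.length := by
    intro s
    have h1 := hLlb s
    have h2 := hMfge s
    have h3 := hMfval s (W s).1.length
    omega
  have hLge : ∀ s : ℕ, s ≤ (W s).1.length := by
    intro s
    induction s with
    | zero => omega
    | succ s ih => have := hLmono s; omega
  -- one-stage F increment
  have hA : ∀ s : ℕ, ((s : ℝ) + 1) * Fq k q (W (s + 1)).1
      ≤ ((s : ℝ) + 1) * Fq k q (W s).1
        + 2 * (((W (s + 1)).1.length : ℝ) - ((W s).1.length : ℝ)) := by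
    intro s
    have hs0 : (0 : ℝ) < (s : ℝ) + 1 := by positivity
    have h1 := appendW_Fq hk q hq0 hq1 hspec (W s) (wrd s) (Mf s (W s).1.length)
    rw [← hWsucc s] at h1
    have h5 : (Mf s (W s).1.length : ℝ) * (nn s : ℝ)
        ≤ ((W (s + 1)).1.length : ℝ) - ((W s).1.length : ℝ) := by
      have h6 : Mf s (W s).1.length * nn s ≤ Mf s (W s).1.length * (nn s + k - 1) :=
        Nat.mul_le_mul_left _ (by omega)
      have h7 : (W s).1.length + Mf s (W s).1.length * nn s ≤ (W (s + 1)).1.length := by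
        have := hLlb s; omega
      have h8 : (((W s).1.length : ℝ)) + (Mf s (W s).1.length : ℝ) * (nn s : ℝ)
          ≤ ((W (s + 1)).1.length : ℝ) := by exact_mod_cast h7
      linarith
    have h7 : (Mf s (W s).1.length : ℝ) * (Fq k q (wrd s).1 + (2 * (j : ℝ) + 5 * (k : ℝ)))
        ≤ (Mf s (W s).1.length : ℝ) * (2 * (nn s : ℝ) / ((s : ℝ) + 1)) :=
      mul_le_mul_of_nonneg_left (hGain s) (Nat.cast_nonneg _)
    have h8 : ((s : ℝ) + 1) * ((Mf s (W s).1.length : ℝ) * (2 * (nn s : ℝ) / ((s : ℝ) + 1)))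
        = 2 * ((Mf s (W s).1.length : ℝ) * (nn s : ℝ)) := by
      field_simp
    calc ((s : ℝ) + 1) * Fq k q (W (s + 1)).1
        ≤ ((s : ℝ) + 1) * (Fq k q (W s).1 + (Mf s (W s).1.length : ℝ)
            * (Fq k q (wrd s).1 + (2 * (j : ℝ) + 5 * (k : ℝ)))) :=
          mul_le_mul_of_nonneg_left h1 hs0.le
      _ = ((s : ℝ) + 1) * Fq k q (W s).1 + ((s : ℝ) + 1)
            * ((Mf s (W s).1.length : ℝ)
              * (Fq k q (wrd s).1 + (2 * (j : ℝ) + 5 * (k : ℝ)))) := by ring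
      _ ≤ ((s : ℝ) + 1) * Fq k q (W s).1 + ((s : ℝ) + 1)
            * ((Mf s (W s).1.length : ℝ) * (2 * (nn s : ℝ) / ((s : ℝ) + 1))) := by
          have h9 := mul_le_mul_of_nonneg_left h7 hs0.le
          linarith
      _ = ((s : ℝ) + 1) * Fq k q (W s).1
            + 2 * ((Mf s (W s).1.length : ℝ) * (nn s : ℝ)) := by rw [h8]
      _ ≤ ((s : ℝ) + 1) * Fq k q (W s).1
            + 2 * (((W (s + 1)).1.length : ℝ) - ((W s).1.length : ℝ)) := by linarith
  -- end-of-stage invariant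
  have hInv : ∀ s : ℕ, ((s : ℝ) + 1) * Fq k q (W (s + 1)).1
      ≤ 3 * ((W (s + 1)).1.length : ℝ) := by
    intro s
    have h1 := hA s
    have h2 : Fq k q (W s).1 ≤ 2 * ((W s).1.length : ℝ) + (k : ℝ) := Fq_crude hk q hq0 hq1 _
    have h3 : ((s : ℝ) + 1) * (2 * ((W s).1.length : ℝ) + (k : ℝ))
        ≤ ((W (s + 1)).1.length : ℝ) := by
      have h4 : (s + 1) * (2 * (W s).1.length + k) ≤ (W (s + 1)).1.length := by
        have h5 := hLb1 s
        have h6 : (s + 1) * (2 * (W s).1.length + k) ≤ (s + 2) * (2 * (W s).1.length + k) :=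
          Nat.mul_le_mul_right _ (by omega)
        omega
      calc ((s : ℝ) + 1) * (2 * ((W s).1.length : ℝ) + (k : ℝ))
          = (((s + 1) * (2 * (W s).1.length + k) : ℕ) : ℝ) := by push_cast; ring
        _ ≤ ((W (s + 1)).1.length : ℝ) := Nat.cast_le.2 h4
    have hs0 : (0 : ℝ) < (s : ℝ) + 1 := by positivity
    have hLs : ((W s).1.length : ℝ) ≤ ((W (s + 1)).1.length : ℝ) := by
      have := hLmono s
      exact_mod_cast by omega
    have hLs0 : (0 : ℝ) ≤ ((W s).1.length : ℝ) := Nat.cast_nonneg _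
    have q2 : ((s : ℝ) + 1) * Fq k q (W s).1
        ≤ ((s : ℝ) + 1) * (2 * ((W s).1.length : ℝ) + (k : ℝ)) :=
      mul_le_mul_of_nonneg_left h2 hs0.le
    linarith
  -- mid-stage estimate
  have hMid : ∀ (s m : ℕ), (W (s + 1)).1.length ≤ m → m ≤ (W (s + 2)).1.length →
      ((s : ℝ) + 2) * Fq k q ((W (s + 2)).1.take m)
        ≤ ((s : ℝ) + 2) * Fq k q (W (s + 1)).1 + 2 * (m : ℝ)
          + ((s : ℝ) + 2) * (4 * (nn (s + 1) : ℝ)) := by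
    intro s m hm1 hm2
    have hm2' : m ≤ (appendW hspec (W (s + 1)) (wrd (s + 1))
        (Mf (s + 1) (W (s + 1)).1.length)).1.length := by
      rw [← hWsucc (s + 1)]
      exact hm2
    obtain ⟨c, hcle, r, htake, hclen, hrm, hrlen⟩ :=
      appendW_decomp hspec (W (s + 1)) (wrd (s + 1)) (Mf (s + 1) (W (s + 1)).1.length) m hm1 hm2'
    have htake' : (W (s + 2)).1.take m
        = (appendW hspec (W (s + 1)) (wrd (s + 1)) c).1 ++ r := by
      rw [hWsucc (s + 1)]; exact htake
    rw [htake']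
    have h1 : Fq k q ((appendW hspec (W (s + 1)) (wrd (s + 1)) c).1 ++ r)
        ≤ Fq k q (appendW hspec (W (s + 1)) (wrd (s + 1)) c).1 + Fq k q r
          + 2 * ((k : ℝ) - 1) := Fq_append hk q hq0 hq1 _ _
    have h2 := appendW_Fq hk q hq0 hq1 hspec (W (s + 1)) (wrd (s + 1)) c
    -- bound the copies term
    have hcnn : (c : ℝ) * (nn (s + 1) : ℝ) ≤ (m : ℝ) := by
      have h3 := appendW_len_lb hspec (W (s + 1)) (wrd (s + 1)) c
      rw [hwlen] at h3
      have h4 : c * nn (s + 1) ≤ c * (nn (s + 1) + k - 1) :=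
        Nat.mul_le_mul_left _ (by omega)
      have h5 : c * nn (s + 1) ≤ m := by omega
      exact_mod_cast h5
    have hss : ((s : ℝ) + 1 + 1) = ((s : ℝ) + 2) := by ring
    have hGs := hGain (s + 1)
    rw [Nat.cast_add, Nat.cast_one, hss] at hGs
    have h6 : (c : ℝ) * (Fq k q (wrd (s + 1)).1 + (2 * (j : ℝ) + 5 * (k : ℝ)))
        ≤ (c : ℝ) * (2 * (nn (s + 1) : ℝ) / ((s : ℝ) + 2)) :=
      mul_le_mul_of_nonneg_left hGs (Nat.cast_nonneg _)
    have hs2 : (0 : ℝ) < (s : ℝ) + 2 := by positivity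
    have h7 : ((s : ℝ) + 2) * ((c : ℝ) * (2 * (nn (s + 1) : ℝ) / ((s : ℝ) + 2)))
        = 2 * ((c : ℝ) * (nn (s + 1) : ℝ)) := by
      field_simp
    -- bound the remainder term
    have h8 : Fq k q r ≤ 2 * (r.length : ℝ) + (k : ℝ) := Fq_crude hk q hq0 hq1 r
    have h9 : (r.length : ℝ) ≤ (nn (s + 1) : ℝ) + (k : ℝ) + (j : ℝ) := by
      have h10 : r.length ≤ nn (s + 1) + k + j := by
        have h11 := hrlen
        rw [hwlen] at h11
        omega
      exact_mod_cast h10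
    have h11 : Fq k q r + 2 * ((k : ℝ) - 1) ≤ 4 * (nn (s + 1) : ℝ) := by
      have h12 : 2 * (j : ℝ) + 5 * (k : ℝ) ≤ (nn (s + 1) : ℝ) := by
        have h13 : 2 * j + 5 * k ≤ nn (s + 1) := by
          have h14 := hnnlb (s + 1)
          have h15 : 2 * j + 5 * k ≤ (s + 1 + 1) * (2 * j + 5 * k) :=
            Nat.le_mul_of_pos_left _ (by omega)
          omega
        exact_mod_cast h13
      have hj0 : (0 : ℝ) ≤ (j : ℝ) := Nat.cast_nonneg _
      linarith
    have hGnn : (0 : ℝ) ≤ Fq k q (wrd (s + 1)).1 + (2 * (j : ℝ) + 5 * (k : ℝ)) := by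
      have := Fq_nonneg q (wrd (s + 1)).1
      have hj0 : (0 : ℝ) ≤ (j : ℝ) := Nat.cast_nonneg _
      linarith
    calc ((s : ℝ) + 2) * Fq k q ((appendW hspec (W (s + 1)) (wrd (s + 1)) c).1 ++ r)
        ≤ ((s : ℝ) + 2) * (Fq k q (appendW hspec (W (s + 1)) (wrd (s + 1)) c).1
            + (Fq k q r + 2 * ((k : ℝ) - 1))) := by
          refine mul_le_mul_of_nonneg_left ?_ hs2.le
          linarith
      _ ≤ ((s : ℝ) + 2) * ((Fq k q (W (s + 1)).1
            + (c : ℝ) * (Fq k q (wrd (s + 1)).1 + (2 * (j : ℝ) + 5 * (k : ℝ))))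
            + 4 * (nn (s + 1) : ℝ)) := by
          refine mul_le_mul_of_nonneg_left ?_ hs2.le
          linarith
      _ = ((s : ℝ) + 2) * Fq k q (W (s + 1)).1
            + ((s : ℝ) + 2) * ((c : ℝ) * (Fq k q (wrd (s + 1)).1
              + (2 * (j : ℝ) + 5 * (k : ℝ))))
            + ((s : ℝ) + 2) * (4 * (nn (s + 1) : ℝ)) := by ring
      _ ≤ ((s : ℝ) + 2) * Fq k q (W (s + 1)).1 + 2 * (m : ℝ)
            + ((s : ℝ) + 2) * (4 * (nn (s + 1) : ℝ)) := by
          have h20 := mul_le_mul_of_nonneg_left h6 hs2.le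
          rw [h7] at h20
          have h21 : 2 * ((c : ℝ) * (nn (s + 1) : ℝ)) ≤ 2 * (m : ℝ) := by linarith
          linarith
  -- definition of the infinite word
  set ω : ℕ → Fin N := fun i => (W (i + 1)).1.getD i (ω₀ 0) with hωdef
  have hgetω : ∀ (s i : ℕ) (h : i < (W s).1.length), ω i = (W s).1[i] := by
    intro s i h
    have hi1 : i < (W (i + 1)).1.length := by
      have h1 := hLge (i + 1)
      omega
    have hω1 : ω i = (W (i + 1)).1[i] := by
      rw [hωdef]
      exact List.getD_eq_getElem _ _ hi1
    rcases le_total (i + 1) s with hle | hle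
    · have hpre : (W (i + 1)).1 <+: (W s).1 := by
        rw [hWdef]; exact buildW_prefix_le hspec ⟨[], hnil⟩ wrd Mf hle
      rw [hω1]
      exact hpre.getElem hi1
    · have hpre : (W s).1 <+: (W (i + 1)).1 := by
        rw [hWdef]; exact buildW_prefix_le hspec ⟨[], hnil⟩ wrd Mf hle
      rw [hω1]
      exact (hpre.getElem h).symm
  have hofFn : ∀ (s n : ℕ), n ≤ (W s).1.length →
      (List.ofFn fun m : Fin n => ω (m : ℕ)) = (W s).1.take n := by
    intro s n hn
    apply List.ext_getElem
    · simp only [List.length_ofFn, List.length_take]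
      omega
    · intro i h1 h2
      rw [List.getElem_ofFn, List.getElem_take]
      simp only [List.length_ofFn] at h1
      exact hgetω s i (by omega)
  have hωShift : ω ∈ ShiftSpace φ P := by
    intro n
    rw [hofFn n n (hLge n)]
    exact prefix_mem_lang (W n).2 (List.take_prefix _ _)
  -- the stage estimate
  have hstage : ∀ (s n : ℕ), 1 ≤ n → (W (s + 1)).1.length ≤ n + k - 1 →
      n + k - 1 ≤ (W (s + 2)).1.length →
      dist1 (freqVec k ω n) q ≤ 12 / ((s : ℝ) + 1) := by
    intro s n hn hm1 hm2
    have hD : (n : ℝ) * dist1 (freqVec k ω n) q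
        = Fq k q ((W (s + 2)).1.take (n + k - 1)) := by
      rw [← key ω n hn, hofFn (s + 2) (n + k - 1) hm2]
    have h1 := hMid s (n + k - 1) hm1 hm2
    have h2 := hInv s
    have hL1 : 2 * k + 1 ≤ (W (s + 1)).1.length := by have := hLb1 s; omega
    have hnL : (W (s + 1)).1.length ≤ 2 * n := by omega
    have hmn : n + k - 1 ≤ 2 * n := by omega
    have hnnL : 9 * (s + 2) * nn (s + 1) ≤ (W (s + 1)).1.length := by
      have := hLb1 s; omega
    -- cast everything
    have hnL' : (((W (s + 1)).1.length : ℕ) : ℝ) ≤ 2 * (n : ℝ) := by exact_mod_cast hnL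
    have hmn' : ((n + k - 1 : ℕ) : ℝ) ≤ 2 * (n : ℝ) := by exact_mod_cast hmn
    have hnnL' : 9 * ((s : ℝ) + 2) * (nn (s + 1) : ℝ) ≤ (((W (s + 1)).1.length : ℕ) : ℝ) := by
      calc 9 * ((s : ℝ) + 2) * (nn (s + 1) : ℝ) = ((9 * (s + 2) * nn (s + 1) : ℕ) : ℝ) := by
            push_cast; ring
        _ ≤ (((W (s + 1)).1.length : ℕ) : ℝ) := Nat.cast_le.2 hnnL
    have hn' : (1 : ℝ) ≤ (n : ℝ) := by exact_mod_cast hn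
    have hs1 : (0 : ℝ) < (s : ℝ) + 1 := by positivity
    have hs2 : (0 : ℝ) < (s : ℝ) + 2 := by positivity
    have hd0 : 0 ≤ dist1 (freqVec k ω n) q := dist1_nonneg _ _
    have hν0 : (0 : ℝ) ≤ (nn (s + 1) : ℝ) := Nat.cast_nonneg _
    rw [le_div_iff₀ hs1]
    have p1 := mul_le_mul_of_nonneg_left h1 hs1.le
    have p2 := mul_le_mul_of_nonneg_left h2 hs2.le
    have p3 := mul_le_mul_of_nonneg_left hnL' hs2.le
    have p4 := mul_le_mul_of_nonneg_left hmn' hs1.le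
    have p5 := mul_le_mul_of_nonneg_left hnnL' hs1.le
    have p6 := mul_le_mul_of_nonneg_left hnL' hs1.le
    have p7 : ((s : ℝ) + 1) * (n : ℝ) ≤ ((s : ℝ) + 2) * (n : ℝ) := by
      have hn0 : (0 : ℝ) ≤ (n : ℝ) := Nat.cast_nonneg _
      nlinarith
    have hgoal : ((s : ℝ) + 1) * (((s : ℝ) + 2) * ((n : ℝ) * dist1 (freqVec k ω n) q))
        ≤ 12 * ((n : ℝ) * ((s : ℝ) + 2)) := by
      rw [hD]
      have hn0 : (0 : ℝ) ≤ (n : ℝ) := Nat.cast_nonneg _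
      have hsn : (0 : ℝ) ≤ ((s : ℝ) + 2) * (n : ℝ) := by positivity
      linarith [p1, p2, p3, p4, p5, p6, p7]
    have hns2 : (0 : ℝ) < (n : ℝ) * ((s : ℝ) + 2) := by positivity
    have hfin : dist1 (freqVec k ω n) q * ((s : ℝ) + 1) * ((n : ℝ) * ((s : ℝ) + 2))
        ≤ 12 * ((n : ℝ) * ((s : ℝ) + 2)) := by linarith [hgoal]
    exact le_of_mul_le_mul_right hfin hns2
  -- conclusion
  refine ⟨ω, hωShift, ?_⟩
  rw [Metric.tendsto_atTop]
  intro ε hε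
  obtain ⟨s₀, hs₀⟩ := exists_nat_gt (12 / ε)
  have hs₀pos : 0 < s₀ := by
    by_contra h
    have h0 : s₀ = 0 := by omega
    rw [h0] at hs₀
    have h1 : (0 : ℝ) < 12 / ε := by positivity
    norm_num at hs₀
    linarith
  refine ⟨(W (s₀ + 1)).1.length + k + 1, fun n hn => ?_⟩
  have hn1 : 1 ≤ n := by omega
  have hm0 : (W (s₀ + 1)).1.length ≤ n + k - 1 := by omega
  obtain ⟨t, hts₀, ht1, ht2⟩ : ∃ t, s₀ ≤ t ∧ (W (t + 1)).1.length ≤ n + k - 1 ∧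
      n + k - 1 ≤ (W (t + 2)).1.length := by
    have hs₀m : s₀ ≤ n + k - 1 := by
      have := hLge (s₀ + 1)
      omega
    set t := Nat.findGreatest (fun t => (W (t + 1)).1.length ≤ n + k - 1) (n + k - 1)
      with htdef
    have htm : t ≤ n + k - 1 := Nat.findGreatest_le _
    have htP : (W (t + 1)).1.length ≤ n + k - 1 :=
      Nat.findGreatest_spec (P := fun t => (W (t + 1)).1.length ≤ n + k - 1) hs₀m hm0
    have htlt : t < n + k - 1 := by have := hLge (t + 1); omega
    have hng : ¬ ((W (t + 2)).1.length ≤ n + k - 1) := by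
      have h := Nat.findGreatest_is_greatest
        (P := fun t => (W (t + 1)).1.length ≤ n + k - 1)
        (n := n + k - 1) (k := t + 1) (by omega) (by omega)
      simpa using h
    exact ⟨t, Nat.le_findGreatest hs₀m hm0, htP, by omega⟩
  have hεt : 12 / ((t : ℝ) + 1) < ε := by
    have ht' : (s₀ : ℝ) ≤ (t : ℝ) := by exact_mod_cast hts₀
    have hs₀' : (1 : ℝ) ≤ (s₀ : ℝ) := by exact_mod_cast hs₀pos
    have h1 : 12 / ((t : ℝ) + 1) ≤ 12 / ((s₀ : ℝ) + 1) := by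
      apply div_le_div_of_nonneg_left (by norm_num) (by linarith) (by linarith)
    have h2 : 12 / ((s₀ : ℝ) + 1) < ε := by
      rw [div_lt_iff₀ (by linarith)]
      rw [div_lt_iff₀ hε] at hs₀
      nlinarith
    linarith
  have hest := hstage t n hn1 ht1 ht2
  have hd0 : 0 ≤ dist1 (freqVec k ω n) q := dist1_nonneg _ _
  rw [Real.dist_eq, sub_zero, abs_of_nonneg hd0]
  linarith

end Paper
end

section
/- Let 𝒫 be a number system partition for (M,φ) with language ℒ, fix k ∈ ℕ and r ≥ 0, and let ω ∈ X. If the sequence (P_k^{(r)}(ω,n))_{n≥1} has property P, then the sequence (P_k^{(r+1)}(ω,n))_{n≥1} also has property P. -/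
open Filter Topology Set

namespace Paper

private lemma aux_div_two_pow_le {a b : ℕ} (ha : 1 ≤ a) (hab : a ≤ b) :
    (b : ℝ) / 2 ^ b ≤ (a : ℝ) / 2 ^ a := by
  rw [div_le_div_iff₀ (by positivity) (by positivity)]
  obtain ⟨d, rfl⟩ := Nat.exists_eq_add_of_le hab
  have h2 : (d : ℝ) + 1 ≤ 2 ^ d := by exact_mod_cast Nat.lt_two_pow_self (n := d)
  have ha' : (1 : ℝ) ≤ a := by exact_mod_cast ha
  have hd : (0 : ℝ) ≤ d := Nat.cast_nonneg d
  push_cast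
  rw [pow_add]
  have h3 : (a : ℝ) + d ≤ a * 2 ^ d := by
    nlinarith [mul_nonneg (sub_nonneg.2 ha') hd,
      mul_le_mul_of_nonneg_left h2 (le_trans zero_le_one ha')]
  nlinarith [mul_le_mul_of_nonneg_right h3 (le_of_lt (pow_pos (show (0:ℝ) < 2 by norm_num) a))]

private lemma cfreq_bounds {N : ℕ} (r : ℕ) (ω : ℕ → Fin N) (b : List (Fin N)) :
    ∀ n, 0 ≤ cfreq r ω b n ∧ cfreq r ω b n ≤ 1 := by
  induction r with
  | zero =>
    intro n
    simp only [cfreq, freq]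
    refine ⟨by positivity, ?_⟩
    rcases Nat.eq_zero_or_pos n with h | h
    · simp [h]
    · rw [div_le_one (by exact_mod_cast h)]
      exact_mod_cast (Finset.card_filter_le _ _).trans (le_of_eq (Finset.card_range n))
  | succ r ih =>
    intro n
    simp only [cfreq]
    rcases Nat.eq_zero_or_pos n with h | h
    · simp [h]
    refine ⟨div_nonneg (Finset.sum_nonneg fun j _ => (ih j).1) (Nat.cast_nonneg n), ?_⟩
    rw [div_le_one (by exact_mod_cast h)]
    calc ∑ j ∈ Finset.Icc 1 n, cfreq r ω b j ≤ ∑ j ∈ Finset.Icc 1 n, (1 : ℝ) :=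
          Finset.sum_le_sum fun j _ => (ih j).2
      _ = n := by rw [Finset.sum_const, Nat.card_Icc]; simp

private lemma dist1_le_of_bounds {α : Type*} [Fintype α] {f p : α → ℝ}
    (hf : ∀ b, 0 ≤ f b ∧ f b ≤ 1) (hp : p ∈ Simplex α) :
    dist1 f p ≤ (Fintype.card α : ℝ) + 1 := by
  have h1 : dist1 f p ≤ ∑ b : α, (1 + p b) := by
    refine Finset.sum_le_sum fun b _ => ?_
    have := (hf b).1; have := (hf b).2; have := hp.1 b
    rw [abs_le]; constructor <;> linarith
  have h2 : ∑ b : α, (1 + p b) = (Fintype.card α : ℝ) + 1 := by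
    rw [Finset.sum_add_distrib, Finset.sum_const, hp.2]
    simp [mul_comm]
  linarith

/-- if `(P_k^{(r)}(ω,n))_n` has property `P`, then so does
`(P_k^{(r+1)}(ω,n))_n`. -/
theorem propP_cesaro_stable
    {N : ℕ}
    {M : Type*} [MetricSpace M] [CompactSpace M]
    (φ : M → M) (P : Fin N → Set M)
    (hNSP : IsNSP φ P)
    (k : ℕ) (hk : 1 ≤ k) (r : ℕ)
    (ω : ℕ → Fin N) (hω : ω ∈ ShiftSpace φ P)
    (hP : HasPropP φ P (cfreqVec r k ω)) :
    HasPropP φ P (cfreqVec (r + 1) k ω) := by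
  intro p hp m hm i ε hε
  have hpS : p ∈ Simplex (Fin k → Fin N) := by
    obtain ⟨hpSK, -⟩ := hp
    simp only [SK, Set.mem_iUnion] at hpSK
    obtain ⟨ω', -, hacc⟩ := hpSK
    exact hacc.1
  set C : ℝ := (Fintype.card (Fin k → Fin N) : ℝ) + 1 with hCdef
  have hC1 : (1 : ℝ) ≤ C := le_add_of_nonneg_left (Nat.cast_nonneg _)
  have htend : Tendsto (fun x : ℕ => (x : ℝ) * C / 2 ^ x) atTop (𝓝 0) := by
    have h0 := (tendsto_self_mul_const_pow_of_lt_one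
      (by norm_num : (0:ℝ) ≤ 1/2) (by norm_num : (1:ℝ)/2 < 1)).mul_const C
    rw [zero_mul] at h0
    exact h0.congr fun x => by rw [one_div, inv_pow]; ring
  have hev : ∀ᶠ x : ℕ in atTop, (x : ℝ) * C / 2 ^ x < ε / 2 :=
    htend.eventually (eventually_lt_nhds (half_pos hε))
  obtain ⟨K, hK⟩ := eventually_atTop.1 hev
  obtain ⟨j₀, hij₀, -, hj₀⟩ := hP p hp (m + 1) (by omega) (max (max i K) 1) (ε / 2)
    (half_pos hε)
  have hi : i ≤ j₀ := le_trans (le_trans (le_max_left i K) (le_max_left _ 1)) hij₀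
  have hKj₀ : K ≤ j₀ := le_trans (le_trans (le_max_right i K) (le_max_left _ 1)) hij₀
  have hj₀1 : 1 ≤ j₀ := le_trans (le_max_right _ 1) hij₀
  have hsmall : (j₀ : ℝ) * C / 2 ^ j₀ < ε / 2 := hK j₀ hKj₀
  have hj₀lt : j₀ < 2 ^ j₀ := Nat.lt_two_pow_self
  refine ⟨2 ^ j₀, le_trans hi hj₀lt.le, ?_, ?_⟩
  · have h1 : ((2 ^ j₀ : ℕ) : ℝ) / 2 ^ (2 ^ j₀) ≤ (j₀ : ℝ) / 2 ^ j₀ :=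
      aux_div_two_pow_le hj₀1 hj₀lt.le
    have h2 : (j₀ : ℝ) / 2 ^ j₀ ≤ (j₀ : ℝ) * C / 2 ^ j₀ := by
      have : (j₀ : ℝ) ≤ (j₀ : ℝ) * C := by nlinarith [Nat.cast_nonneg (α := ℝ) j₀]
      exact by gcongr
    linarith
  · intro n hn1 hn2
    have htoweq : tow m (2 ^ 2 ^ j₀) = tow (m + 1) (2 ^ j₀) := by
      simp [tow, Function.iterate_succ_apply]
    have hnpos : 0 < n := lt_of_le_of_lt (Nat.zero_le _) hn1
    have hnR : (0 : ℝ) < n := by exact_mod_cast hnpos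
    have hcard : (Finset.Icc 1 n).card = n := by rw [Nat.card_Icc]; omega
    have step1 : dist1 (cfreqVec (r + 1) k ω n) p
        ≤ (∑ j ∈ Finset.Icc 1 n, dist1 (cfreqVec r k ω j) p) / n := by
      have hbb : ∀ b : Fin k → Fin N,
          |cfreqVec (r + 1) k ω n b - p b|
            ≤ (∑ j ∈ Finset.Icc 1 n, |cfreqVec r k ω j b - p b|) / n := by
        intro b
        have heq : cfreqVec (r + 1) k ω n b - p b
            = (∑ j ∈ Finset.Icc 1 n, (cfreqVec r k ω j b - p b)) / n := by
          rw [Finset.sum_sub_distrib, Finset.sum_const, hcard, sub_div, nsmul_eq_mul,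
            mul_div_cancel_left₀ _ (ne_of_gt hnR)]
          rfl
        rw [heq, abs_div, abs_of_pos hnR]
        exact (div_le_div_iff_of_pos_right hnR).2 (Finset.abs_sum_le_sum_abs _ _)
      calc dist1 (cfreqVec (r + 1) k ω n) p
          ≤ ∑ b, (∑ j ∈ Finset.Icc 1 n, |cfreqVec r k ω j b - p b|) / n :=
            Finset.sum_le_sum fun b _ => hbb b
        _ = (∑ j ∈ Finset.Icc 1 n, ∑ b, |cfreqVec r k ω j b - p b|) / n := by
            rw [← Finset.sum_div, Finset.sum_comm]
        _ = (∑ j ∈ Finset.Icc 1 n, dist1 (cfreqVec r k ω j) p) / n := rfl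
    have hj₀n : j₀ ≤ n := le_trans hj₀lt.le hn1.le
    have hsplit : ∑ j ∈ Finset.Icc 1 n, dist1 (cfreqVec r k ω j) p
        = ∑ j ∈ Finset.Ioc 0 j₀, dist1 (cfreqVec r k ω j) p
          + ∑ j ∈ Finset.Ioc j₀ n, dist1 (cfreqVec r k ω j) p := by
      rw [show Finset.Icc 1 n = Finset.Ioc 0 n from Finset.Icc_add_one_left_eq_Ioc 0 n, ← Finset.sum_Ioc_consecutive _ (Nat.zero_le j₀) hj₀n]
    have hbound1 : ∑ j ∈ Finset.Ioc 0 j₀, dist1 (cfreqVec r k ω j) p ≤ (j₀ : ℝ) * C := by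
      calc ∑ j ∈ Finset.Ioc 0 j₀, dist1 (cfreqVec r k ω j) p
          ≤ ∑ _j ∈ Finset.Ioc 0 j₀, C := Finset.sum_le_sum fun j _ =>
            dist1_le_of_bounds (fun b => cfreq_bounds r ω (List.ofFn b) j) hpS
        _ = (j₀ : ℝ) * C := by rw [Finset.sum_const, Nat.card_Ioc, nsmul_eq_mul]; simp
    have hbound2 : ∑ j ∈ Finset.Ioc j₀ n, dist1 (cfreqVec r k ω j) p ≤ (n : ℝ) * (ε / 2) := by
      calc ∑ j ∈ Finset.Ioc j₀ n, dist1 (cfreqVec r k ω j) p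
          ≤ ∑ _j ∈ Finset.Ioc j₀ n, (ε / 2) := Finset.sum_le_sum fun j hj => by
            have hj' := Finset.mem_Ioc.1 hj
            exact (hj₀ j hj'.1 (lt_of_le_of_lt hj'.2 (htoweq ▸ hn2))).le
        _ = ((n - j₀ : ℕ) : ℝ) * (ε / 2) := by
            rw [Finset.sum_const, Nat.card_Ioc, nsmul_eq_mul]
        _ ≤ (n : ℝ) * (ε / 2) := by
            apply mul_le_mul_of_nonneg_right _ (le_of_lt (half_pos hε))
            exact_mod_cast Nat.sub_le n j₀
    have hlast : (j₀ : ℝ) * C / n < ε / 2 := by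
      have h2n : ((2 : ℝ)) ^ j₀ ≤ (n : ℝ) := by exact_mod_cast hn1.le
      have hle := div_le_div_of_nonneg_left
        (show (0:ℝ) ≤ (j₀ : ℝ) * C by positivity) (show (0:ℝ) < 2 ^ j₀ by positivity) h2n
      linarith
    calc dist1 (cfreqVec (r + 1) k ω n) p
        ≤ (∑ j ∈ Finset.Icc 1 n, dist1 (cfreqVec r k ω j) p) / n := step1
      _ ≤ ((j₀ : ℝ) * C + (n : ℝ) * (ε / 2)) / n := by
          rw [hsplit]
          exact (div_le_div_iff_of_pos_right hnR).2 (add_le_add hbound1 hbound2)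
      _ = (j₀ : ℝ) * C / n + ε / 2 := by field_simp
      _ < ε / 2 + ε / 2 := by linarith
      _ = ε := by ring

end Paper
end

section
/- Let N ≥ 2 be an integer. The set of essentially non-normal numbers in base N — that is, the set of x ∈ [0,1) such that for every digit i ∈ {0,…,N−1} the limit lim_{n→∞} Π(x, i, n) does not exist — is residual in [0,1). -/
open Filter Topology Set

namespace BaseN

/-- The ℓ¹ distance between two finitely-indexed real vectors. -/
noncomputable def dist1 {α : Type*} [Fintype α] (p q : α → ℝ) : ℝ :=
  ∑ b, |p b - q b|

/-- The simplex of probability vectors indexed by `α`. -/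
def Simplex (α : Type*) [Fintype α] : Set (α → ℝ) :=
  {p | (∀ b, 0 ≤ p b) ∧ ∑ b, p b = 1}

/-- The set of accumulation points, in the simplex with the ℓ¹ norm, of a sequence
of vectors. -/
def AccPts {α : Type*} [Fintype α] (f : ℕ → (α → ℝ)) : Set (α → ℝ) :=
  {p | p ∈ Simplex α ∧ ∀ ε : ℝ, 0 < ε → ∀ n₀ : ℕ, ∃ n, n₀ ≤ n ∧ dist1 (f n) p < ε}

/-- `d : ℝ → ℕ → Fin N` assigns to each `x ∈ [0,1)` the digit sequence
`d x 0, d x 1, …` (so `d x h = d_{h+1}(x)`) of its unique non-terminating base-`N`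
expansion: the digits sum to `x`, and for `x ≠ 0` the digit sequence is not
eventually zero. -/
def IsNonTerminatingDigits {N : ℕ} (d : ℝ → ℕ → Fin N) : Prop :=
  ∀ x ∈ Set.Ico (0 : ℝ) 1,
    HasSum (fun h : ℕ => (d x h : ℝ) / (N : ℝ) ^ (h + 1)) x ∧
    (x ≠ 0 → ∀ H : ℕ, ∃ h, H ≤ h ∧ (d x h : ℕ) ≠ 0)

/-- `bfreq d x b n` is the frequency `Π(x,b,n)` of the block `b` among the first
`n` digits of `x`. -/
noncomputable def bfreq {N : ℕ} (d : ℝ → ℕ → Fin N) (x : ℝ) (b : List (Fin N))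
    (n : ℕ) : ℝ :=
  (((Finset.range n).filter fun i =>
      (List.ofFn fun m : Fin b.length => d x (i + (m : ℕ))) = b).card : ℝ) / n

/-- `Π_k(x,n)`: the vector of frequencies of all blocks of length `k` among the
first `n` digits of `x`. -/
noncomputable def bfreqVec {N : ℕ} (d : ℝ → ℕ → Fin N) (x : ℝ) (k n : ℕ) :
    (Fin k → Fin N) → ℝ :=
  fun b => bfreq d x (List.ofFn b) n

noncomputable def pval {N : ℕ} (s : ℕ → Fin N) (n : ℕ) : ℝ :=
  ∑ h ∈ Finset.range n, (s h : ℝ) / (N : ℝ) ^ (h + 1)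

variable {N : ℕ}

lemma pval_nonneg (hN : 2 ≤ N) (s : ℕ → Fin N) (n : ℕ) : 0 ≤ pval s n := by
  apply Finset.sum_nonneg
  intro h _
  positivity

lemma term_eq (hN : 2 ≤ N) (h : ℕ) :
    ((N:ℝ) - 1) / (N : ℝ) ^ (h + 1) = ((N:ℝ) ^ h)⁻¹ - ((N:ℝ) ^ (h+1))⁻¹ := by
  have hN0 : (N:ℝ) ≠ 0 := by positivity
  field_simp
  ring

lemma sum_geom_Ico (hN : 2 ≤ N) (a n : ℕ) (han : a ≤ n) :
    ∑ h ∈ Finset.Ico a n, ((N:ℝ) - 1) / (N : ℝ) ^ (h + 1)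
      = ((N:ℝ) ^ a)⁻¹ - ((N:ℝ) ^ n)⁻¹ := by
  induction n with
  | zero =>
    have : a = 0 := Nat.le_zero.mp han
    subst this; simp
  | succ n ih =>
    rcases Nat.lt_or_ge a (n+1) with h | h
    · have han' : a ≤ n := Nat.lt_succ_iff.mp h
      rw [Finset.sum_Ico_succ_top han', ih han', term_eq hN]
      ring
    · have : a = n + 1 := le_antisymm han h
      subst this; simp

lemma digit_le (hN : 2 ≤ N) (c : Fin N) : (c : ℝ) ≤ (N:ℝ) - 1 := by
  have : (c : ℕ) ≤ N - 1 := Nat.le_sub_one_of_lt c.isLt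
  have h1 : ((c : ℕ) : ℝ) ≤ ((N - 1 : ℕ) : ℝ) := by exact_mod_cast this
  have h2 : ((N - 1 : ℕ) : ℝ) = (N : ℝ) - 1 := by
    have : 1 ≤ N := by omega
    push_cast [this]; ring
  linarith


lemma pval_le (hN : 2 ≤ N) (s : ℕ → Fin N) (a n : ℕ) (han : a ≤ n) :
    ∑ h ∈ Finset.Ico a n, (s h : ℝ) / (N : ℝ) ^ (h + 1)
      ≤ ((N:ℝ) ^ a)⁻¹ - ((N:ℝ) ^ n)⁻¹ := by
  rw [← sum_geom_Ico hN a n han]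
  apply Finset.sum_le_sum
  intro h _
  have h1 : (0:ℝ) < (N:ℝ) ^ (h+1) := by positivity
  have := digit_le hN (s h)
  exact div_le_div_of_nonneg_right this h1.le


lemma hasSum_tail_geom (hN : 2 ≤ N) (n : ℕ) :
    HasSum (fun h : ℕ => ((N:ℝ) - 1) / (N : ℝ) ^ (h + n + 1)) (((N:ℝ) ^ n)⁻¹) := by
  have hN1 : (1:ℝ) < (N:ℝ) := by
    have : (2:ℝ) ≤ (N:ℝ) := by exact_mod_cast hN
    linarith
  have hNne : (N:ℝ) ≠ 0 := by positivity
  have h0 : (0:ℝ) ≤ (N:ℝ)⁻¹ := by positivity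
  have h1 : (N:ℝ)⁻¹ < 1 := by
    rw [inv_lt_one_iff₀]; right; exact hN1
  have H := (hasSum_geometric_of_lt_one h0 h1).mul_left (((N:ℝ) - 1) / (N:ℝ) ^ (n+1))
  have hfun : (fun h : ℕ => ((N:ℝ) - 1) / (N:ℝ) ^ (n+1) * ((N:ℝ)⁻¹)^h)
      = fun h : ℕ => ((N:ℝ) - 1) / (N : ℝ) ^ (h + n + 1) := by
    funext h
    rw [inv_pow]
    have hp : (N:ℝ) ^ (h + n + 1) = (N:ℝ)^(n+1) * (N:ℝ)^h := by
      rw [← pow_add]; ring_nf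
    rw [hp]
    field_simp
  have hval : ((N:ℝ) - 1) / (N:ℝ) ^ (n+1) * (1 - (N:ℝ)⁻¹)⁻¹ = ((N:ℝ)^n)⁻¹ := by
    have h2 : (1:ℝ) - (N:ℝ)⁻¹ ≠ 0 := by
      have := h1; linarith
    have h3 : (1:ℝ) - (N:ℝ)⁻¹ = ((N:ℝ) - 1)/(N:ℝ) := by field_simp
    have h4 : (N:ℝ) - 1 ≠ 0 := by
      intro hcon; apply h2; rw [h3, hcon]; simp
    rw [h3, pow_succ]
    field_simp
  rw [hfun, hval] at H
  exact H

lemma pval_le_x (hN : 2 ≤ N) (d : ℝ → ℕ → Fin N) (hd : IsNonTerminatingDigits d)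
    {x : ℝ} (hx : x ∈ Set.Ico (0:ℝ) 1) (n : ℕ) :
    pval (d x) n ≤ x ∧ x ≤ pval (d x) n + ((N:ℝ)^n)⁻¹ := by
  have hs := (hd x hx).1
  have ht : HasSum (fun h : ℕ => (d x (h + n) : ℝ) / (N:ℝ)^((h+n)+1)) (x - pval (d x) n) := by
    apply (hasSum_nat_add_iff (f := fun h : ℕ => (d x h : ℝ)/(N:ℝ)^(h+1)) n).mpr
    have he : x - pval (d x) n + ∑ i ∈ Finset.range n, (d x i : ℝ)/(N:ℝ)^(i+1) = x := by
      simp [pval]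
    rw [he]; exact hs
  constructor
  · have h0 : (0:ℝ) ≤ x - pval (d x) n :=
      hasSum_le (fun h => by positivity) hasSum_zero ht
    linarith
  · have hle : x - pval (d x) n ≤ ((N:ℝ)^n)⁻¹ := by
      refine hasSum_le (fun h => ?_) ht (hasSum_tail_geom hN n)
      exact div_le_div_of_nonneg_right (digit_le hN _) (by positivity)
    linarith

lemma digits_eq_of_mem_Ioo (hN : 2 ≤ N) (d : ℝ → ℕ → Fin N) (hd : IsNonTerminatingDigits d)
    {x : ℝ} (hx : x ∈ Set.Ico (0:ℝ) 1) (s : ℕ → Fin N) (n : ℕ)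
    (h1 : pval s n < x) (h2 : x < pval s n + ((N:ℝ)^n)⁻¹) :
    ∀ h, h < n → d x h = s h := by
  intro h
  induction h using Nat.strong_induction_on with
  | _ h IH =>
    intro hhn
    have hPeq : pval (d x) h = pval s h := by
      unfold pval
      apply Finset.sum_congr rfl
      intro h' hh'
      rw [IH h' (Finset.mem_range.mp hh') (lt_trans (Finset.mem_range.mp hh') hhn)]
    have hsplit : pval (d x) (h+1) = pval (d x) h + (d x h : ℝ)/(N:ℝ)^(h+1) :=
      Finset.sum_range_succ _ _
    obtain ⟨hA, hB⟩ := pval_le_x hN d hd hx (h+1)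
    have hdec : pval s n = pval s h + ((s h : ℝ)/(N:ℝ)^(h+1)
        + ∑ h' ∈ Finset.Ico (h+1) n, (s h' : ℝ)/(N:ℝ)^(h'+1)) := by
      unfold pval
      rw [Finset.range_eq_Ico,
        ← Finset.sum_Ico_consecutive (m := 0) (n := h) (k := n)
          (f := fun h' => (s h' : ℝ)/(N:ℝ)^(h'+1)) (Nat.zero_le h) (le_of_lt hhn),
        Finset.sum_eq_sum_Ico_succ_bot hhn, ← Finset.range_eq_Ico]
    have hrest0 : 0 ≤ ∑ h' ∈ Finset.Ico (h+1) n, (s h' : ℝ)/(N:ℝ)^(h'+1) :=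
      Finset.sum_nonneg fun _ _ => by positivity
    have hrest1 : ∑ h' ∈ Finset.Ico (h+1) n, (s h' : ℝ)/(N:ℝ)^(h'+1)
        ≤ ((N:ℝ)^(h+1))⁻¹ - ((N:ℝ)^n)⁻¹ := pval_le hN s (h+1) n hhn
    have hpow : (0:ℝ) < (N:ℝ)^(h+1) := by positivity
    have k1 : (d x h : ℝ)/(N:ℝ)^(h+1) ≤ x - pval s h := by
      rw [← hPeq]; linarith
    have k2 : x - pval s h ≤ (d x h : ℝ)/(N:ℝ)^(h+1) + ((N:ℝ)^(h+1))⁻¹ := by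
      rw [← hPeq]; linarith
    have k3 : (s h : ℝ)/(N:ℝ)^(h+1) < x - pval s h := by linarith
    have k4 : x - pval s h < (s h : ℝ)/(N:ℝ)^(h+1) + ((N:ℝ)^(h+1))⁻¹ := by linarith
    have e1 : (d x h : ℝ) < (s h : ℝ) + 1 := by
      have h5 : (d x h:ℝ)/(N:ℝ)^(h+1) < ((s h:ℝ)+1)/(N:ℝ)^(h+1) := by
        rw [add_div]
        have : (1:ℝ)/(N:ℝ)^(h+1) = ((N:ℝ)^(h+1))⁻¹ := one_div _
        linarith
      exact (div_lt_div_iff_of_pos_right hpow).mp h5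
    have e2 : (s h : ℝ) < (d x h : ℝ) + 1 := by
      have h5 : (s h:ℝ)/(N:ℝ)^(h+1) < ((d x h:ℝ)+1)/(N:ℝ)^(h+1) := by
        rw [add_div]
        have : (1:ℝ)/(N:ℝ)^(h+1) = ((N:ℝ)^(h+1))⁻¹ := one_div _
        linarith
      exact (div_lt_div_iff_of_pos_right hpow).mp h5
    have n1 : (d x h : ℕ) < (s h : ℕ) + 1 := by exact_mod_cast e1
    have n2 : (s h : ℕ) < (d x h : ℕ) + 1 := by exact_mod_cast e2
    exact Fin.ext (by omega)

lemma pval_split (hN : 2 ≤ N) (s : ℕ → Fin N) (a n : ℕ) (han : a ≤ n) :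
    pval s n = pval s a + ∑ h ∈ Finset.Ico a n, (s h : ℝ)/(N:ℝ)^(h+1) := by
  unfold pval
  rw [Finset.range_eq_Ico,
    ← Finset.sum_Ico_consecutive (m := 0) (n := a) (k := n)
      (f := fun h => (s h : ℝ)/(N:ℝ)^(h+1)) (Nat.zero_le a) han, ← Finset.range_eq_Ico]

lemma pval_add_le_one (hN : 2 ≤ N) (s : ℕ → Fin N) (n : ℕ) :
    pval s n + ((N:ℝ)^n)⁻¹ ≤ 1 := by
  have h := pval_le hN s 0 n (Nat.zero_le n)
  have h2 : pval s n = ∑ h ∈ Finset.Ico 0 n, (s h : ℝ)/(N:ℝ)^(h+1) := by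
    unfold pval; rw [Finset.range_eq_Ico]
  rw [h2]
  simp only [pow_zero, inv_one] at h
  linarith

lemma bfreq_single (d : ℝ → ℕ → Fin N) (x : ℝ) (i : Fin N) (n : ℕ) :
    bfreq d x [i] n
      = (((Finset.range n).filter fun h => d x h = i).card : ℝ) / n := by
  unfold bfreq
  have : ((Finset.range n).filter fun h =>
        (List.ofFn fun m : Fin ([i] : List (Fin N)).length => d x (h + (m:ℕ))) = [i])
      = ((Finset.range n).filter fun h => d x h = i) := by
    apply Finset.filter_congr
    intro h _
    simp [List.ofFn_succ]
  rw [this]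

lemma dense_step (hN : 2 ≤ N) (d : ℝ → ℕ → Fin N) (hd : IsNonTerminatingDigits d)
    {z : ℝ} (hz : z ∈ Set.Ico (0:ℝ) 1) {ε : ℝ} (hε : 0 < ε) (m : ℕ) (c : Fin N) :
    ∃ (n n₀ : ℕ) (s : ℕ → Fin N) (p : ℝ),
      m ≤ n ∧ 4 * n₀ < n ∧ (∀ h, n₀ ≤ h → s h = c) ∧
      p ∈ Set.Ico (0:ℝ) 1 ∧
      p ∈ Set.Ioo (pval s n) (pval s n + ((N:ℝ)^n)⁻¹) ∧
      Set.Ioo (pval s n) (pval s n + ((N:ℝ)^n)⁻¹) ⊆ Metric.ball z ε := by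
  have hN1 : (1:ℝ) < (N:ℝ) := by
    have : (2:ℝ) ≤ (N:ℝ) := by exact_mod_cast hN
    linarith
  obtain ⟨n₀, hn₀⟩ : ∃ n₀ : ℕ, ((N:ℝ)^n₀)⁻¹ < ε := by
    obtain ⟨n₀, h⟩ := exists_pow_lt_of_lt_one hε
      (by rw [inv_lt_one_iff₀]; right; exact hN1)
    exact ⟨n₀, by rwa [inv_pow] at h⟩
  set n := 4*n₀ + m + 1 with hn
  have hn₀n : n₀ ≤ n := by omega
  set s : ℕ → Fin N := fun h => if h < n₀ then d z h else c with hs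
  set p := pval s n + ((N:ℝ)^n)⁻¹/2 with hp
  have hinvn : (0:ℝ) < ((N:ℝ)^n)⁻¹ := by positivity
  have hinvn₀ : (0:ℝ) < ((N:ℝ)^n₀)⁻¹ := by positivity
  have hpeq : pval s n₀ = pval (d z) n₀ := by
    unfold pval
    apply Finset.sum_congr rfl
    intro h hh
    rw [hs]
    simp only [Finset.mem_range.mp hh, if_pos]
  obtain ⟨hz1, hz2⟩ := pval_le_x hN d hd hz n₀
  have hsplit := pval_split hN s n₀ n hn₀n
  have hrest0 : 0 ≤ ∑ h ∈ Finset.Ico n₀ n, (s h : ℝ)/(N:ℝ)^(h+1) :=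
    Finset.sum_nonneg fun _ _ => by positivity
  have hrest1 := pval_le hN s n₀ n hn₀n
  -- the cylinder interval sits inside [pval s n₀, pval s n₀ + (N^n₀)⁻¹]
  have hlow : pval s n₀ ≤ pval s n := by linarith
  have hhigh : pval s n + ((N:ℝ)^n)⁻¹ ≤ pval s n₀ + ((N:ℝ)^n₀)⁻¹ := by linarith
  refine ⟨n, n₀, s, p, by omega, by omega, ?_, ⟨?_, ?_⟩, ⟨?_, ?_⟩, ?_⟩
  · intro h hh
    rw [hs]
    simp [Nat.not_lt.mpr hh]
  · have h0 := pval_nonneg hN s n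
    rw [hp]; linarith
  · have h1 := pval_add_le_one hN s n
    rw [hp]; linarith
  · rw [hp]; linarith
  · rw [hp]; linarith
  · intro q hq
    obtain ⟨hq1, hq2⟩ := hq
    rw [Metric.mem_ball, Real.dist_eq, abs_sub_lt_iff]
    rw [hpeq] at hlow hhigh
    constructor
    · linarith
    · linarith

lemma mem_residual_hi (hN : 2 ≤ N) (d : ℝ → ℕ → Fin N) (hd : IsNonTerminatingDigits d)
    (i : Fin N) (m : ℕ) :
    {y : ↥(Set.Ico (0:ℝ) 1) | ∃ n, m ≤ n ∧ ∃ s : ℕ → Fin N,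
        3*n < 4*((Finset.range n).filter (fun h => s h = i)).card ∧
        (y:ℝ) ∈ Set.Ioo (pval s n) (pval s n + ((N:ℝ)^n)⁻¹)}
      ∈ residual ↥(Set.Ico (0:ℝ) 1) := by
  classical
  apply residual_of_dense_open
  · rw [isOpen_iff_forall_mem_open]
    rintro y ⟨n, hmn, s, hcard, hmem⟩
    refine ⟨Subtype.val ⁻¹' Set.Ioo (pval s n) (pval s n + ((N:ℝ)^n)⁻¹),
      fun y' hy' => ⟨n, hmn, s, hcard, hy'⟩,
      isOpen_Ioo.preimage continuous_subtype_val, hmem⟩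
  · rw [dense_iff_inter_open]
    intro U hU hUne
    obtain ⟨W, hW, hWU⟩ := isOpen_induced_iff.mp hU
    obtain ⟨y, hy⟩ := hUne
    have hyW : (y:ℝ) ∈ W := by rw [← hWU] at hy; exact hy
    obtain ⟨ε, hε, hball⟩ := Metric.isOpen_iff.mp hW _ hyW
    obtain ⟨n, n₀, s, p, hmn, h4, hsc, hpI, hpIoo, hsub⟩ :=
      dense_step hN d hd y.2 hε m i
    refine ⟨⟨p, hpI⟩, ?_, n, hmn, s, ?_, hpIoo⟩
    · rw [← hWU]
      exact hball (hsub hpIoo)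
    · have hsubset : Finset.Ico n₀ n ⊆ (Finset.range n).filter (fun h => s h = i) := by
        intro h hh
        rw [Finset.mem_filter, Finset.mem_range]
        obtain ⟨hh1, hh2⟩ := Finset.mem_Ico.mp hh
        exact ⟨hh2, hsc h hh1⟩
      have hcc := Finset.card_le_card hsubset
      rw [Nat.card_Ico] at hcc
      omega

lemma mem_residual_lo (hN : 2 ≤ N) (d : ℝ → ℕ → Fin N) (hd : IsNonTerminatingDigits d)
    (i : Fin N) (m : ℕ) :
    {y : ↥(Set.Ico (0:ℝ) 1) | ∃ n, m ≤ n ∧ ∃ s : ℕ → Fin N,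
        4*((Finset.range n).filter (fun h => s h = i)).card < n ∧
        (y:ℝ) ∈ Set.Ioo (pval s n) (pval s n + ((N:ℝ)^n)⁻¹)}
      ∈ residual ↥(Set.Ico (0:ℝ) 1) := by
  classical
  obtain ⟨j, hji⟩ : ∃ j : Fin N, j ≠ i := by
    by_cases h : (i : ℕ) = 0
    · refine ⟨⟨1, by omega⟩, fun he => ?_⟩
      rw [← he] at h
      simp at h
    · exact ⟨⟨0, by omega⟩, fun he => h (by rw [← he])⟩
  apply residual_of_dense_open
  · rw [isOpen_iff_forall_mem_open]
    rintro y ⟨n, hmn, s, hcard, hmem⟩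
    refine ⟨Subtype.val ⁻¹' Set.Ioo (pval s n) (pval s n + ((N:ℝ)^n)⁻¹),
      fun y' hy' => ⟨n, hmn, s, hcard, hy'⟩,
      isOpen_Ioo.preimage continuous_subtype_val, hmem⟩
  · rw [dense_iff_inter_open]
    intro U hU hUne
    obtain ⟨W, hW, hWU⟩ := isOpen_induced_iff.mp hU
    obtain ⟨y, hy⟩ := hUne
    have hyW : (y:ℝ) ∈ W := by rw [← hWU] at hy; exact hy
    obtain ⟨ε, hε, hball⟩ := Metric.isOpen_iff.mp hW _ hyW
    obtain ⟨n, n₀, s, p, hmn, h4, hsc, hpI, hpIoo, hsub⟩ :=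
      dense_step hN d hd y.2 hε m j
    refine ⟨⟨p, hpI⟩, ?_, n, hmn, s, ?_, hpIoo⟩
    · rw [← hWU]
      exact hball (hsub hpIoo)
    · have hsubset : (Finset.range n).filter (fun h => s h = i) ⊆ Finset.range n₀ := by
        intro h hh
        rw [Finset.mem_filter] at hh
        rw [Finset.mem_range]
        by_contra hcon
        push_neg at hcon
        have hsj := hsc h hcon
        rw [hsj] at hh
        exact hji hh.2
      have hcc := Finset.card_le_card hsubset
      rw [Finset.card_range] at hcc
      omega

lemma bfreq_of_cyl (hN : 2 ≤ N) (d : ℝ → ℕ → Fin N) (hd : IsNonTerminatingDigits d)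
    (y : ↥(Set.Ico (0:ℝ) 1)) (i : Fin N) (n : ℕ) (s : ℕ → Fin N)
    (hmem : (y:ℝ) ∈ Set.Ioo (pval s n) (pval s n + ((N:ℝ)^n)⁻¹)) :
    bfreq d (y:ℝ) [i] n
      = (((Finset.range n).filter fun h => s h = i).card : ℝ) / n := by
  classical
  rw [bfreq_single]
  have heq : ((Finset.range n).filter fun h => d (y:ℝ) h = i)
      = ((Finset.range n).filter fun h => s h = i) := by
    apply Finset.filter_congr
    intro h hh
    rw [digits_eq_of_mem_Ioo hN d hd y.2 s n hmem.1 hmem.2 h (Finset.mem_range.mp hh)]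
  rw [heq]

/-- the set of essentially non-normal numbers in base `N` — the
`x ∈ [0,1)` such that for every digit `i` the limit `lim_n Π(x,i,n)` does not
exist — is residual in `[0,1)`. -/
theorem essentially_nonnormal_residual_baseN
    {N : ℕ} (hN : 2 ≤ N)
    (d : ℝ → ℕ → Fin N) (hd : IsNonTerminatingDigits d) :
    {y : ↥(Set.Ico (0 : ℝ) 1) | ∀ i : Fin N,
        ¬ ∃ L : ℝ, Tendsto (fun n => bfreq d (y : ℝ) [i] n) atTop (nhds L)}
      ∈ residual ↥(Set.Ico (0 : ℝ) 1) := by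
  classical
  have hres : (⋂ i : Fin N, ⋂ m : ℕ,
      ({y : ↥(Set.Ico (0:ℝ) 1) | ∃ n, m ≤ n ∧ ∃ s : ℕ → Fin N,
          3*n < 4*((Finset.range n).filter (fun h => s h = i)).card ∧
          (y:ℝ) ∈ Set.Ioo (pval s n) (pval s n + ((N:ℝ)^n)⁻¹)} ∩
       {y : ↥(Set.Ico (0:ℝ) 1) | ∃ n, m ≤ n ∧ ∃ s : ℕ → Fin N,
          4*((Finset.range n).filter (fun h => s h = i)).card < n ∧
          (y:ℝ) ∈ Set.Ioo (pval s n) (pval s n + ((N:ℝ)^n)⁻¹)}))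
      ∈ residual ↥(Set.Ico (0:ℝ) 1) := by
    rw [countable_iInter_mem]
    intro i
    rw [countable_iInter_mem]
    intro m
    exact Filter.inter_mem (mem_residual_hi hN d hd i m) (mem_residual_lo hN d hd i m)
  apply Filter.mem_of_superset hres
  intro y hy
  simp only [Set.mem_iInter, Set.mem_inter_iff, Set.mem_setOf_eq] at hy
  simp only [Set.mem_setOf_eq]
  intro i hLex
  obtain ⟨L, hL⟩ := hLex
  obtain ⟨M, hM⟩ := (Metric.tendsto_atTop.mp hL) (1/4) (by norm_num)
  obtain ⟨hyhi, hylo⟩ := hy i M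
  obtain ⟨n1, hmn1, s1, hc1, hm1⟩ := hyhi
  obtain ⟨n2, hmn2, s2, hc2, hm2⟩ := hylo
  have hb1 := bfreq_of_cyl hN d hd y i n1 s1 hm1
  have hb2 := bfreq_of_cyl hN d hd y i n2 s2 hm2
  set c1 := ((Finset.range n1).filter (fun h => s1 h = i)).card with hc1d
  set c2 := ((Finset.range n2).filter (fun h => s2 h = i)).card with hc2d
  have hle1 : c1 ≤ n1 := by
    rw [hc1d]
    exact le_trans (Finset.card_filter_le _ _) (le_of_eq (Finset.card_range n1))
  have hn1pos : 0 < n1 := by omega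
  have hn2pos : 0 < n2 := by omega
  have hn1R : (0:ℝ) < (n1:ℝ) := by exact_mod_cast hn1pos
  have hn2R : (0:ℝ) < (n2:ℝ) := by exact_mod_cast hn2pos
  have hgt : 3/4 < bfreq d (y:ℝ) [i] n1 := by
    rw [hb1, lt_div_iff₀ hn1R]
    have hcast : (3:ℝ)*(n1:ℝ) < 4*(c1:ℝ) := by exact_mod_cast hc1
    linarith
  have hlt : bfreq d (y:ℝ) [i] n2 < 1/4 := by
    rw [hb2, div_lt_iff₀ hn2R]
    have hcast : (4:ℝ)*(c2:ℝ) < (n2:ℝ) := by exact_mod_cast hc2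
    linarith
  have hd1 := hM n1 hmn1
  have hd2 := hM n2 hmn2
  rw [Real.dist_eq, abs_sub_lt_iff] at hd1 hd2
  obtain ⟨hd1a, hd1b⟩ := hd1
  obtain ⟨hd2a, hd2b⟩ := hd2
  linarith


end BaseN
end
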